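/- arXiv:1408.5686 — 9 statements merged into one kernel-verified Lean document; each statement's English description precedes it below -/
import Mathlib

section
/- Let V be a complex inner product space and let u_1, ..., u_k be pairwise distinct vectors in V. Then the k×k complex matrix M with entries M_{ij} = exp(⟨u_i, u_j⟩) (inner product conjugate-linear in the first argument) is Hermitian positive definite; in particular it is invertible. Equivalently, any finite set of distinct exponential vectors is linearly independent. -/
open scoped InnerProductSpace ComplexOrder Matrix Nat
open Polynomial Nat

lemma gram_psd {ι W : Type*} [Fintype ι] [NormedAddCommGroup W] [InnerProductSpace ℂ W]
    (v : ι → W) : (Matrix.of fun i j => (⟪v i, v j⟫_ℂ)).PosSemidef := by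
  refine Matrix.PosSemidef.of_dotProduct_mulVec_nonneg ?_ ?_
  · ext i j
    simp [Matrix.conjTranspose_apply, inner_conj_symm]
  · intro x
    have key : dotProduct (star x) ((Matrix.of fun i j => (⟪v i, v j⟫_ℂ)) *ᵥ x)
        = ⟪∑ i, x i • v i, ∑ j, x j • v j⟫_ℂ := by
      simp only [dotProduct, Matrix.mulVec, Matrix.of_apply, Pi.star_apply,
        sum_inner, inner_sum, inner_smul_left, inner_smul_right, Finset.mul_sum,
        Complex.star_def]
      rw [Finset.sum_comm]
      exact Finset.sum_congr rfl fun i _ => Finset.sum_congr rfl fun j _ => by ring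
    rw [key, inner_self_eq_norm_sq_to_K]
    have : (0:ℂ) ≤ ((‖∑ i, x i • v i‖ ^ 2 : ℝ) : ℂ) := by
      rw [show (0:ℂ) = ((0:ℝ):ℂ) by norm_num, Complex.real_le_real]
      positivity
    simpa using this

lemma entry_pow_psd {k : ℕ} (A : Matrix (Fin k) (Fin k) ℂ) (hA : A.PosSemidef) (n : ℕ) :
    (Matrix.of fun i j => A i j ^ n).PosSemidef := by
  open scoped MatrixOrder in
  obtain ⟨C, hC⟩ := CStarAlgebra.nonneg_iff_eq_star_mul_self.mp hA.nonneg
  rw [Matrix.star_eq_conjTranspose] at hC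
  subst hC
  set w : Fin k → EuclideanSpace ℂ (Fin n → Fin k) := fun i => WithLp.toLp 2 (fun t : Fin n → Fin k => ∏ m, C (t m) i) with hw
  have key : ∀ i j, (Cᴴ * C) i j ^ n = ⟪w i, w j⟫_ℂ := by
    intro i j
    calc (Cᴴ * C) i j ^ n = (∑ p, (starRingEnd ℂ) (C p i) * C p j) ^ n := by
          simp [Matrix.mul_apply, Matrix.conjTranspose_apply]
      _ = ∑ t ∈ Fintype.piFinset (fun _ : Fin n => Finset.univ),
            ∏ m, (starRingEnd ℂ) (C (t m) i) * C (t m) j := Finset.sum_pow' _ _ n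
      _ = ⟪w i, w j⟫_ℂ := by
          simp [PiLp.inner_apply, RCLike.inner_apply, hw, Finset.prod_mul_distrib, map_prod,
            Fintype.piFinset_univ, mul_comm]
  have : (Matrix.of fun i j => (Cᴴ * C) i j ^ n) = Matrix.of fun i j => ⟪w i, w j⟫_ℂ := by
    ext i j; simp [key i j]
  rw [this]; exact gram_psd w


lemma endgame {V : Type*} [NormedAddCommGroup V] [InnerProductSpace ℂ V]
    {k : ℕ} (u : Fin k → V) (hu : Function.Injective u) (x : Fin k → ℂ) (hx : x ≠ 0)
    (h : ∀ (n : ℕ) (i : Fin k), ∑ j, ⟪u i, u j⟫_ℂ ^ n * x j = 0) : False := by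
  classical
  set S : Finset (Fin k) := Finset.univ.filter (fun j => x j ≠ 0) with hSdef
  have hS : S.Nonempty := by
    obtain ⟨j, hj⟩ := Function.ne_iff.mp hx
    refine ⟨j, ?_⟩
    simp only [hSdef, Finset.mem_filter, Finset.mem_univ, true_and]
    simpa using hj
  obtain ⟨i, hiS, hmax⟩ := S.exists_max_image (fun j => ‖u j‖) hS
  have hxi : x i ≠ 0 := by simpa [hSdef] using hiS
  set c : ℂ := ⟪u i, u i⟫_ℂ with hc
  -- key: only i itself can have x j ≠ 0 and ⟪u i, u j⟫ = c
  have key : ∀ j, x j ≠ 0 → ⟪u i, u j⟫_ℂ = c → j = i := by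
    intro j hxj hcj
    have hjS : j ∈ S := by simp [hSdef, hxj]
    have hnorm : ‖u j‖ ≤ ‖u i‖ := hmax j hjS
    have hval : ⟪u i, u j⟫_ℂ = (‖u i‖ : ℂ) ^ 2 := by
      rw [hcj, hc, inner_self_eq_norm_sq_to_K]
      norm_cast
    rcases eq_or_lt_of_le (norm_nonneg (u i)) with hzero | hpos
    · -- ‖u i‖ = 0
      have hui : u i = 0 := by rwa [eq_comm, norm_eq_zero] at hzero
      have huj : u j = 0 := by
        have : ‖u j‖ ≤ 0 := by simpa [← hzero] using hnorm
        exact norm_eq_zero.mp (le_antisymm this (norm_nonneg _))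
      exact hu (huj.trans hui.symm)
    · -- ‖u i‖ > 0
      have h2 : ‖u i‖ ^ 2 ≤ ‖u i‖ * ‖u j‖ := by
        have := norm_inner_le_norm (𝕜 := ℂ) (u i) (u j)
        calc ‖u i‖ ^ 2 = ‖⟪u i, u j⟫_ℂ‖ := by
              rw [hval]; simp [norm_pow]
          _ ≤ ‖u i‖ * ‖u j‖ := this
      have hle : ‖u i‖ ≤ ‖u j‖ := by
        have := h2
        rw [sq] at this
        exact le_of_mul_le_mul_left this hpos
      have heq : ‖u j‖ = ‖u i‖ := le_antisymm hnorm hle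
      have hval2 : ⟪u i, u j⟫_ℂ = (‖u i‖ : ℂ) * (‖u j‖ : ℂ) := by
        rw [hval, heq, sq]
      have := inner_eq_norm_mul_iff.mp hval2
      -- (‖u j‖ : ℂ) • u i = (‖u i‖ : ℂ) • u j
      rw [heq] at this
      have huij : u i = u j := by
        have hne : ((‖u i‖ : ℂ)) ≠ 0 :=
          Complex.ofReal_ne_zero.mpr (ne_of_gt hpos)
        exact smul_right_injective V hne this
      exact (hu huij.symm)
  -- Lagrange-style polynomial
  set T : Finset ℂ := (Finset.univ.image fun j => ⟪u i, u j⟫_ℂ).erase c with hT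
  set P : ℂ[X] := ∏ t ∈ T, (C (c - t)⁻¹ * (X - C t)) with hP
  have heval : ∀ j, P.eval ⟪u i, u j⟫_ℂ = if ⟪u i, u j⟫_ℂ = c then 1 else 0 := by
    intro j
    by_cases hjc : ⟪u i, u j⟫_ℂ = c
    · rw [if_pos hjc, hP, eval_prod]
      refine Finset.prod_eq_one fun t ht => ?_
      have htc : t ≠ c := (Finset.mem_erase.mp ht).1
      simp only [eval_mul, eval_C, eval_sub, eval_X, hjc]
      rw [inv_mul_cancel₀ (sub_ne_zero.mpr (Ne.symm htc))]
    · rw [if_neg hjc, hP, eval_prod]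
      refine Finset.prod_eq_zero (i := ⟪u i, u j⟫_ℂ) ?_ ?_
      · exact Finset.mem_erase.mpr ⟨hjc, Finset.mem_image_of_mem _ (Finset.mem_univ j)⟩
      · simp
  -- the sum over j of x j * P.eval (⟪u i, u j⟫) is zero
  have hzero : ∑ j, x j * P.eval ⟪u i, u j⟫_ℂ = 0 := by
    calc ∑ j, x j * P.eval ⟪u i, u j⟫_ℂ
        = ∑ j, ∑ n ∈ Finset.range (P.natDegree + 1),
            P.coeff n * (⟪u i, u j⟫_ℂ ^ n * x j) := by
          refine Finset.sum_congr rfl fun j _ => ?_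
          rw [eval_eq_sum_range, Finset.mul_sum]
          exact Finset.sum_congr rfl fun n _ => by ring
      _ = ∑ n ∈ Finset.range (P.natDegree + 1),
            P.coeff n * ∑ j, ⟪u i, u j⟫_ℂ ^ n * x j := by
          rw [Finset.sum_comm]
          exact Finset.sum_congr rfl fun n _ => by rw [Finset.mul_sum]
      _ = 0 := by simp [h _ i]
  -- but it also equals x i
  have hxi0 : ∑ j, x j * P.eval ⟪u i, u j⟫_ℂ = x i := by
    rw [Finset.sum_eq_single i]
    · rw [heval i, if_pos rfl, mul_one]
    · intro j _ hji
      rw [heval j]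
      by_cases hjc : ⟪u i, u j⟫_ℂ = c
      · have : x j = 0 := by
          by_contra hxj
          exact hji (key j hxj hjc)
        simp [this]
      · simp [hjc]
    · intro hi; exact absurd (Finset.mem_univ i) hi
  rw [hzero] at hxi0
  exact hxi (hxi0.symm)


/-- For pairwise distinct vectors `u 0, …, u (k-1)` in a complex inner
product space, the Gram-type matrix with entries `exp ⟪u i, u j⟫` is Hermitian positive
definite; in particular it is invertible (equivalently, any finite set of distinct
exponential vectors is linearly independent). -/
theorem exp_inner_matrix_posDef {V : Type*} [NormedAddCommGroup V] [InnerProductSpace ℂ V]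
    {k : ℕ} (u : Fin k → V) (hu : Function.Injective u) :
    (Matrix.of fun i j : Fin k => Complex.exp ⟪u i, u j⟫_ℂ).PosDef ∧
      IsUnit (Matrix.of fun i j : Fin k => Complex.exp ⟪u i, u j⟫_ℂ).det := by
  classical
  have hGpsd : ∀ n : ℕ, (Matrix.of fun i j : Fin k => ⟪u i, u j⟫_ℂ ^ n).PosSemidef := by
    intro n
    simpa using entry_pow_psd (Matrix.of fun i j : Fin k => ⟪u i, u j⟫_ℂ) (gram_psd u) n
  have endg : ∀ (x : Fin k → ℂ), x ≠ 0 →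
      (∀ (n : ℕ) (i : Fin k), ∑ j, ⟪u i, u j⟫_ℂ ^ n * x j = 0) → False :=
    fun x hx h => endgame u hu x hx h
  have hHerm : (Matrix.of fun i j : Fin k => Complex.exp ⟪u i, u j⟫_ℂ).IsHermitian := by
    ext i j
    simp only [Matrix.conjTranspose_apply, Matrix.of_apply, RCLike.star_def]
    rw [← Complex.exp_conj, inner_conj_symm]
  have hpos : ∀ x : Fin k → ℂ, x ≠ 0 →
      0 < dotProduct (star x)
        ((Matrix.of fun i j : Fin k => Complex.exp ⟪u i, u j⟫_ℂ) *ᵥ x) := by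
    intro x hx
    set t : ℕ → ℂ := fun n => ((n ! : ℂ))⁻¹ *
      dotProduct (star x) ((Matrix.of fun i j : Fin k => ⟪u i, u j⟫_ℂ ^ n) *ᵥ x) with ht
    have hexp : ∀ i j : Fin k, HasSum (fun n : ℕ => ⟪u i, u j⟫_ℂ ^ n / n !)
        (Complex.exp ⟪u i, u j⟫_ℂ) := fun i j => by
      rw [Complex.exp_eq_exp_ℂ]; exact NormedSpace.expSeries_div_hasSum_exp _
    have h1 : HasSum (fun n : ℕ => ∑ i, ∑ j, star (x i) * (⟪u i, u j⟫_ℂ ^ n / n !) * x j)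
        (∑ i, ∑ j, star (x i) * Complex.exp ⟪u i, u j⟫_ℂ * x j) :=
      hasSum_sum fun i _ => hasSum_sum fun j _ =>
        ((hexp i j).mul_left (star (x i))).mul_right (x j)
    have hfun : (fun n : ℕ => ∑ i, ∑ j, star (x i) * (⟪u i, u j⟫_ℂ ^ n / n !) * x j) = t := by
      funext n
      rw [ht]
      simp only [dotProduct, Matrix.mulVec, Matrix.of_apply, Pi.star_apply,
        Finset.mul_sum]
      exact Finset.sum_congr rfl fun i _ => Finset.sum_congr rfl fun j _ => by ring
    have htarget : dotProduct (star x)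
        ((Matrix.of fun i j : Fin k => Complex.exp ⟪u i, u j⟫_ℂ) *ᵥ x)
        = ∑ i, ∑ j, star (x i) * Complex.exp ⟪u i, u j⟫_ℂ * x j := by
      simp only [dotProduct, Matrix.mulVec, Matrix.of_apply, Pi.star_apply,
        Finset.mul_sum]
      exact Finset.sum_congr rfl fun i _ => Finset.sum_congr rfl fun j _ => by ring
    rw [hfun] at h1
    rw [htarget]
    have hnn : ∀ n, 0 ≤ t n := by
      intro n
      refine mul_nonneg ?_ ((hGpsd n).dotProduct_mulVec_nonneg x)
      rw [show ((n ! : ℂ)) = (((n ! : ℝ)) : ℂ) by push_cast; ring, ← Complex.ofReal_inv,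
        show (0:ℂ) = ((0:ℝ):ℂ) by norm_num, Complex.real_le_real]
      positivity
    have hex : ∃ n, t n ≠ 0 := by
      by_contra hco
      push_neg at hco
      refine endg x hx fun n i => ?_
      have hq : dotProduct (star x)
          ((Matrix.of fun i j : Fin k => ⟪u i, u j⟫_ℂ ^ n) *ᵥ x) = 0 := by
        have := hco n
        rw [ht] at this
        rcases mul_eq_zero.mp this with h' | h'
        · exact absurd h' (by
            have : ((n ! : ℂ)) ≠ 0 := by exact_mod_cast Nat.factorial_ne_zero n
            simpa using this)
        · exact h'
      have hrow := ((hGpsd n).dotProduct_mulVec_zero_iff x).mp hq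
      have := congrFun hrow i
      simpa [Matrix.mulVec, dotProduct] using this
    obtain ⟨n0, hn0⟩ := hex
    exact hasSum_lt (f := fun _ : ℕ => (0:ℂ)) (fun n => hnn n)
      (lt_of_le_of_ne (hnn n0) (Ne.symm hn0)) hasSum_zero h1
  have hPD : (Matrix.of fun i j : Fin k => Complex.exp ⟪u i, u j⟫_ℂ).PosDef := .of_dotProduct_mulVec_pos hHerm hpos
  exact ⟨hPD, hPD.det_pos.ne'.isUnit⟩
end

section
/- Let G be a second countable metric group acting continuously on a second countable metric space A, and let K : A × A → ℂ be a continuous positive definite kernel that is G-invariant, i.e. K(gα, gβ) = K(α, β) for all α, β ∈ A and g ∈ G. Then there exist a complex separable Hilbert space H, a continuous map λ : A → H whose range has dense linear span in H, and a strongly continuous unitary representation g ↦ π(g) of G on H such that K(α, β) = ⟨λ(α), λ(β)⟩ for all α, β ∈ A and π(g)λ(α) = λ(gα) for all g ∈ G, α ∈ A. -/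
open scoped InnerProductSpace ComplexOrder

noncomputable section GNSAux

namespace GNSProof

open Finsupp UniformSpace

variable {A : Type} (K : A → A → ℂ)

/-- The sesquilinear form on finitely supported functions. -/
def bf (f g : A →₀ ℂ) : ℂ :=
  f.sum fun α cα => g.sum fun β cβ => (starRingEnd ℂ) cα * cβ * K α β

lemma bf_def (f g : A →₀ ℂ) :
    bf K f g = ∑ a ∈ f.support, ∑ b ∈ g.support,
      (starRingEnd ℂ) (f a) * g b * K a b := rfl

lemma bf_single_single (α β : A) (c d : ℂ) :
    bf K (single α c) (single β d) = (starRingEnd ℂ) c * d * K α β := by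
  unfold bf
  rw [Finsupp.sum_single_index, Finsupp.sum_single_index]
  · simp
  · simp [Finsupp.sum]

lemma bf_add_left (f f' g : A →₀ ℂ) :
    bf K (f + f') g = bf K f g + bf K f' g := by
  unfold bf
  rw [Finsupp.sum_add_index'] <;> simp [add_mul, Finsupp.sum_add]

lemma bf_add_right (f g g' : A →₀ ℂ) :
    bf K f (g + g') = bf K f g + bf K f g' := by
  unfold bf
  rw [← Finsupp.sum_add]
  refine Finsupp.sum_congr fun a _ => ?_
  rw [Finsupp.sum_add_index'] <;> simp [mul_add, add_mul]

lemma bf_smul_left (c : ℂ) (f g : A →₀ ℂ) :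
    bf K (c • f) g = (starRingEnd ℂ) c * bf K f g := by
  unfold bf
  rw [Finsupp.sum_smul_index, Finsupp.mul_sum]
  · refine Finsupp.sum_congr fun a _ => ?_
    rw [Finsupp.mul_sum]
    refine Finsupp.sum_congr fun b _ => ?_
    simp [map_mul]; ring
  · simp [Finsupp.sum]

lemma bf_smul_right (c : ℂ) (f g : A →₀ ℂ) :
    bf K f (c • g) = c * bf K f g := by
  unfold bf
  rw [Finsupp.mul_sum]
  refine Finsupp.sum_congr fun a _ => ?_
  rw [Finsupp.sum_smul_index, Finsupp.mul_sum]
  · refine Finsupp.sum_congr fun b _ => ?_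
    ring
  · simp

lemma bf_zero_left (g : A →₀ ℂ) : bf K 0 g = 0 := by
  simp [bf, Finsupp.sum]

lemma bf_zero_right (f : A →₀ ℂ) : bf K f 0 = 0 := by
  simp [bf, Finsupp.sum]

section Pos

variable (hKpos : ∀ (k : ℕ) (α : Fin k → A) (c : Fin k → ℂ),
      0 ≤ ∑ i, ∑ j, (starRingEnd ℂ) (c i) * c j * K (α i) (α j))

include hKpos

lemma herm (a b : A) : (starRingEnd ℂ) (K a b) = K b a := by
  have haa := hKpos 1 ![a] ![1]
  have hbb := hKpos 1 ![b] ![1]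
  simp [Fin.sum_univ_one] at haa hbb
  have ha_im : (K a a).im = 0 := haa.2.symm
  have hb_im : (K b b).im = 0 := hbb.2.symm
  have h1 := hKpos 2 ![a, b] ![1, 1]
  have h2 := hKpos 2 ![a, b] ![1, Complex.I]
  simp [Fin.sum_univ_two, Complex.le_def] at h1 h2
  apply Complex.ext
  · have := h2.2
    simp [Complex.add_im, Complex.mul_im, Complex.conj_im, Complex.conj_re,
      Complex.I_re, Complex.I_im, ha_im, hb_im] at this
    simp [Complex.conj_re]
    linarith
  · have := h1.2
    simp [Complex.add_im, ha_im, hb_im] at this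
    simp [Complex.conj_im]
    linarith

lemma bf_pos (f : A →₀ ℂ) : 0 ≤ bf K f f := by
  classical
  have e := f.support.equivFin
  have := hKpos f.support.card (fun i => (e.symm i : A)) (fun i => f (e.symm i))
  refine le_of_le_of_eq this ?_
  rw [bf_def]
  rw [← Finset.sum_coe_sort f.support]
  rw [← Equiv.sum_comp e.symm (fun x => ∑ b ∈ f.support, (starRingEnd ℂ) (f x) * f b * K x b)]
  refine Finset.sum_congr rfl fun i _ => ?_
  rw [← Finset.sum_coe_sort f.support]
  rw [← Equiv.sum_comp e.symm (fun b => (starRingEnd ℂ) (f (e.symm i)) * f b * K (e.symm i) b)]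

end Pos

variable (hherm : ∀ a b : A, (starRingEnd ℂ) (K a b) = K b a)

include hherm in
lemma bf_conj (f g : A →₀ ℂ) : (starRingEnd ℂ) (bf K f g) = bf K g f := by
  rw [bf_def, bf_def, map_sum]
  rw [Finset.sum_comm]
  refine Finset.sum_congr rfl fun b _ => ?_
  rw [map_sum]
  refine Finset.sum_congr rfl fun a _ => ?_
  rw [map_mul, map_mul, RingHomCompTriple.comp_apply, RingHom.id_apply, hherm]
  ring

/-- Invariance of the form under `mapDomain` along a kernel-preserving map. -/
lemma bf_mapDomain (σ : A → A) (hσ : ∀ a b : A, K (σ a) (σ b) = K a b)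
    (f g : A →₀ ℂ) :
    bf K (mapDomain σ f) (mapDomain σ g) = bf K f g := by
  classical
  induction f using Finsupp.induction_linear with
  | zero => simp [bf_zero_left]
  | add f f' hf hf' => simp [mapDomain_add, bf_add_left, hf, hf']
  | single a c =>
    induction g using Finsupp.induction_linear with
    | zero => simp [bf_zero_right]
    | add g g' hg hg' =>
      rw [mapDomain_single] at hg hg'
      rw [mapDomain_single, mapDomain_add, bf_add_right, hg, hg']
      exact (bf_add_right K _ g g').symm
    | single b d =>
      rw [mapDomain_single, mapDomain_single, bf_single_single, bf_single_single, hσ]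

section General

/-! ### Extending linear isometries to the completion -/

variable {V : Type} [SeminormedAddCommGroup V] [NormedSpace ℂ V]

/-- Extension of a continuous linear map `V →L V` to the completion. -/
def extL (T : V →L[ℂ] V) : Completion V →L[ℂ] Completion V where
  toFun := Completion.map T
  map_add' := fun a b => by
    induction a, b using Completion.induction_on₂ with
    | hp =>
      exact isClosed_eq (Completion.continuous_map.comp continuous_add)
        ((Completion.continuous_map.comp continuous_fst).fun_add
          (Completion.continuous_map.comp continuous_snd))
    | ih a b =>
      rw [← Completion.coe_add, Completion.map_coe T.uniformContinuous,
        Completion.map_coe T.uniformContinuous, Completion.map_coe T.uniformContinuous,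
        map_add, Completion.coe_add]
  map_smul' := fun c a => by
    induction a using Completion.induction_on with
    | hp =>
      exact isClosed_eq (Completion.continuous_map.comp (continuous_const_smul c))
        (Completion.continuous_map.fun_const_smul c)
    | ih a =>
      show Completion.map ⇑T (c • (↑a : Completion V)) = c • Completion.map ⇑T (↑a : Completion V)
      rw [← Completion.coe_smul, Completion.map_coe T.uniformContinuous, Completion.map_coe T.uniformContinuous,
        map_smul, Completion.coe_smul]
  cont := Completion.continuous_map

lemma extL_coe (T : V →L[ℂ] V) (v : V) : extL T (↑v : Completion V) = ↑(T v) :=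
  Completion.map_coe T.uniformContinuous v

lemma clm_ext_completion {f g : Completion V →L[ℂ] Completion V}
    (h : ∀ v : V, f v = g v) : f = g := by
  apply ContinuousLinearMap.coeFn_injective
  exact Completion.ext f.continuous g.continuous h

lemma norm_extL (T : V →L[ℂ] V) (hT : ∀ v, ‖T v‖ = ‖v‖) (x : Completion V) :
    ‖extL T x‖ = ‖x‖ := by
  induction x using Completion.induction_on with
  | hp => exact isClosed_eq (continuous_norm.comp (extL T).continuous) continuous_norm
  | ih v => rw [extL_coe, Completion.norm_coe, Completion.norm_coe, hT]

/-- Strong continuity from continuity on a spanning set, for isometric operators. -/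
lemma strong_cont {G H : Type} [TopologicalSpace G] [NormedAddCommGroup H]
    [NormedSpace ℂ H] (U : G → H →L[ℂ] H) (hiso : ∀ g x, ‖U g x‖ = ‖x‖)
    (S : Set H) (hdense : Dense (Submodule.span ℂ S : Set H))
    (hS : ∀ s ∈ S, Continuous fun g => U g s) (x : H) :
    Continuous fun g => U g x := by
  have hspan : ∀ y ∈ Submodule.span ℂ S, Continuous fun g => U g y := by
    intro y hy
    induction hy using Submodule.span_induction with
    | mem z hz => exact hS z hz
    | zero => simpa using continuous_const
    | add z w _ _ hz hw => simpa using hz.fun_add hw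
    | smul c z _ hz => simpa using hz.fun_const_smul c
  rw [continuous_iff_continuousAt]
  intro g₀
  rw [ContinuousAt, Metric.tendsto_nhds]
  intro ε hε
  obtain ⟨y, hy, hxy⟩ : ∃ y ∈ (Submodule.span ℂ S : Set H), dist x y < ε / 3 := by
    rcases Metric.mem_closure_iff.1 (hdense x) (ε / 3) (by linarith) with ⟨y, hy, h⟩
    exact ⟨y, hy, h⟩
  have hc : ∀ᶠ g in nhds g₀, dist (U g y) (U g₀ y) < ε / 3 :=
    Metric.tendsto_nhds.1 ((hspan y hy).continuousAt (x := g₀)) (ε / 3) (by linarith)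
  filter_upwards [hc] with g hg
  have h1 : dist (U g x) (U g y) = dist x y := by
    rw [dist_eq_norm, ← map_sub, hiso, dist_eq_norm]
  have h2 : dist (U g₀ y) (U g₀ x) = dist y x := by
    rw [dist_eq_norm, ← map_sub, hiso, dist_eq_norm]
  calc dist (U g x) (U g₀ x)
      ≤ dist (U g x) (U g y) + dist (U g y) (U g₀ y) + dist (U g₀ y) (U g₀ x) :=
        dist_triangle4 _ _ _ _
    _ < ε / 3 + ε / 3 + ε / 3 := by
        rw [h1, h2, dist_comm y x]
        exact add_lt_add (add_lt_add hxy hg) hxy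
    _ = ε := by ring

end General

end GNSProof

end GNSAux

/-- A GNS-type Gelfand triple for a `G`-invariant positive definite kernel `K` on `A`:
a complex (separable) Hilbert space `H`, a continuous map `lam : A → H` whose range has
dense linear span, and a strongly continuous unitary representation `rep` of `G` on `H`
reproducing `K` and intertwining the `G`-action. -/
structure GNSTriple (G A : Type) [Group G] [TopologicalSpace G] [TopologicalSpace A]
    [MulAction G A] (K : A → A → ℂ) where
  H : Type
  [instNACG : NormedAddCommGroup H]
  [instIPS : InnerProductSpace ℂ H]
  [instComplete : CompleteSpace H]
  [instSep : TopologicalSpace.SeparableSpace H]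
  lam : A → H
  rep : G →* (H ≃ₗᵢ[ℂ] H)
  lam_continuous : Continuous lam
  dense_span : Dense (Submodule.span ℂ (Set.range lam) : Set H)
  rep_continuous : ∀ x : H, Continuous fun g : G => rep g x
  inner_lam : ∀ α β : A, ⟪lam α, lam β⟫_ℂ = K α β
  equivariant : ∀ (g : G) (α : A), rep g (lam α) = lam (g • α)

attribute [instance] GNSTriple.instNACG GNSTriple.instIPS GNSTriple.instComplete
  GNSTriple.instSep

/-- **GNS construction.** Let `G` be a second countable metric group acting
continuously on a second countable metric space `A`, and let `K` be a continuous,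
positive definite, `G`-invariant kernel on `A`.  Then there is a Gelfand triple
`(H, lam, rep)` for `K`. -/
theorem gns_existence (G A : Type) [Group G] [MetricSpace G] [IsTopologicalGroup G]
    [SecondCountableTopology G] [MetricSpace A] [SecondCountableTopology A]
    [MulAction G A] [ContinuousSMul G A] (K : A → A → ℂ)
    (hKcont : Continuous fun p : A × A => K p.1 p.2)
    (hKpos : ∀ (k : ℕ) (α : Fin k → A) (c : Fin k → ℂ),
      0 ≤ ∑ i, ∑ j, (starRingEnd ℂ) (c i) * c j * K (α i) (α j))
    (hKinv : ∀ (g : G) (α β : A), K (g • α) (g • β) = K α β) :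
    Nonempty (GNSTriple G A K) := by
  classical
  open GNSProof Finsupp UniformSpace in
  -- hermitian symmetry of the kernel
  have hherm : ∀ a b : A, (starRingEnd ℂ) (K a b) = K b a := herm K hKpos
  -- the semi-inner-product space structure on `A →₀ ℂ`
  letI core : PreInnerProductSpace.Core ℂ (A →₀ ℂ) :=
    { inner := bf K
      conj_inner_symm := fun x y => bf_conj K hherm y x
      re_inner_nonneg := fun x => (Complex.le_def.1 (bf_pos K hKpos x)).1
      add_left := fun x y z => bf_add_left K x y z
      smul_left := fun x y r => bf_smul_left K r x y }
  letI : SeminormedAddCommGroup (A →₀ ℂ) :=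
    @InnerProductSpace.Core.toSeminormedAddCommGroup ℂ (A →₀ ℂ) _ _ _ core
  letI : NormedSpace ℂ (A →₀ ℂ) :=
    @InnerProductSpace.Core.toNormedSpace ℂ (A →₀ ℂ) _ _ _ core
  letI : InnerProductSpace ℂ (A →₀ ℂ) :=
    { inner := bf K
      norm_sq_eq_re_inner := fun x => by
        have h : ‖x‖ = Real.sqrt (RCLike.re (bf K x x)) := rfl
        rw [h, Real.sq_sqrt (show (0:ℝ) ≤ RCLike.re (bf K x x) from
          (Complex.le_def.1 (bf_pos K hKpos x)).1)]
      conj_inner_symm := fun x y => bf_conj K hherm y x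
      add_left := fun x y z => bf_add_left K x y z
      smul_left := fun x y r => bf_smul_left K r x y }
  have normV : ∀ v : A →₀ ℂ, ‖v‖ = Real.sqrt (RCLike.re (bf K v v)) := fun _ => rfl
  -- the Hilbert space and the map lam
  let lam : A → Completion (A →₀ ℂ) := fun α => ↑(single α 1 : A →₀ ℂ)
  have inner_lam : ∀ α β : A, ⟪lam α, lam β⟫_ℂ = K α β := by
    intro α β
    show ⟪((single α 1 : A →₀ ℂ) : Completion (A →₀ ℂ)), ((single β 1 : A →₀ ℂ) :
      Completion (A →₀ ℂ))⟫_ℂ = K α β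
    rw [Completion.inner_coe]
    show bf K (single α 1) (single β 1) = K α β
    rw [bf_single_single]
    simp
  -- the squared distance formula
  have hb : ∀ α β : A, bf K (single α 1 - single β 1) (single α 1 - single β 1)
      = K α α - K α β - K β α + K β β := by
    intro α β
    have hs : (single α 1 - single β 1 : A →₀ ℂ)
        = single α 1 + (-1 : ℂ) • single β 1 := by
      rw [sub_eq_add_neg, neg_one_smul]
    rw [hs]
    simp only [bf_add_left, bf_add_right, bf_smul_left, bf_smul_right, bf_single_single,
      map_neg, map_one]
    ring
  have hdist : ∀ α β : A, dist (lam α) (lam β)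
      = Real.sqrt (RCLike.re (K α α - K α β - K β α + K β β)) := by
    intro α β
    show dist ((single α 1 : A →₀ ℂ) : Completion (A →₀ ℂ)) _ = _
    rw [dist_eq_norm, ← Completion.coe_sub, Completion.norm_coe, normV, hb]
  -- continuity of lam
  have lam_cont : Continuous lam := by
    rw [continuous_iff_continuousAt]
    intro α₀
    rw [ContinuousAt, tendsto_iff_dist_tendsto_zero]
    have hK2 : Filter.Tendsto (fun α => Real.sqrt (RCLike.re
        (K α α - K α α₀ - K α₀ α + K α₀ α₀))) (nhds α₀) (nhds 0) := by
      have c1 : Continuous fun α : A => K α α - K α α₀ - K α₀ α + K α₀ α₀ := by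
        have h11 : Continuous fun α : A => K α α :=
          hKcont.comp (continuous_id.prodMk continuous_id)
        have h12 : Continuous fun α : A => K α α₀ :=
          hKcont.comp (continuous_id.prodMk continuous_const)
        have h21 : Continuous fun α : A => K α₀ α :=
          hKcont.comp (continuous_const.prodMk continuous_id)
        exact ((h11.sub h12).sub h21).add continuous_const
      have := (Real.continuous_sqrt.comp (RCLike.continuous_re.comp c1)).tendsto α₀
      simpa [Function.comp_def] using this
    refine Filter.Tendsto.congr' ?_ hK2
    filter_upwards with α
    rw [hdist]
  -- the isometries on the finitely supported functions
  let Tl : G → (A →₀ ℂ) →L[ℂ] (A →₀ ℂ) := fun g =>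
    LinearIsometry.toContinuousLinearMap
      ⟨lmapDomain ℂ ℂ (g • ·), fun f => by
        show ‖mapDomain (g • ·) f‖ = ‖f‖
        rw [normV, normV, bf_mapDomain K (g • ·) (fun a b => hKinv g a b)]⟩
  have Tl_apply : ∀ (g : G) (f : A →₀ ℂ), Tl g f = mapDomain (g • ·) f := fun _ _ => rfl
  -- the unitaries on the completion
  let U : G → Completion (A →₀ ℂ) →L[ℂ] Completion (A →₀ ℂ) := fun g => extL (Tl g)
  have U_coe : ∀ (g : G) (f : A →₀ ℂ), U g ↑f = ↑(mapDomain (g • ·) f) := fun g f =>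
    extL_coe (Tl g) f
  have U_norm : ∀ (g : G) (x : Completion (A →₀ ℂ)), ‖U g x‖ = ‖x‖ := fun g =>
    norm_extL (Tl g) (fun f => by rw [Tl_apply, normV, normV,
      bf_mapDomain K (g • ·) (fun a b => hKinv g a b)])
  have hcomp : ∀ (g h : G) (v : A →₀ ℂ),
      mapDomain (fun a : A => (g * h) • a) v
        = mapDomain (g • ·) (mapDomain (h • ·) v) := by
    intro g h v
    rw [← Finsupp.mapDomain_comp]
    congr 1
    funext a
    exact mul_smul g h a
  have U_mul : ∀ g h : G, U (g * h) = (U g).comp (U h) := by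
    intro g h
    apply clm_ext_completion
    intro v
    rw [ContinuousLinearMap.comp_apply, U_coe, U_coe, U_coe, hcomp]
  have U_one : U 1 = ContinuousLinearMap.id ℂ (Completion (A →₀ ℂ)) := by
    apply clm_ext_completion
    intro v
    rw [U_coe]
    have : (fun a : A => (1 : G) • a) = id := funext fun a => one_smul G a
    rw [this, Finsupp.mapDomain_id, ContinuousLinearMap.id_apply]
  have U_inv_comp : ∀ g : G, (U g).comp (U g⁻¹) = ContinuousLinearMap.id ℂ _ := by
    intro g
    rw [← U_mul, mul_inv_cancel, U_one]
  have U_inv_comp' : ∀ g : G, (U g⁻¹).comp (U g) = ContinuousLinearMap.id ℂ _ := by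
    intro g
    rw [← U_mul, inv_mul_cancel, U_one]
  -- the unitary representation
  let e : G → (Completion (A →₀ ℂ) ≃ₗᵢ[ℂ] Completion (A →₀ ℂ)) := fun g =>
    { toLinearEquiv := LinearEquiv.ofLinear (U g).toLinearMap (U g⁻¹).toLinearMap
        (by ext x; exact DFunLike.congr_fun (U_inv_comp g) x)
        (by ext x; exact DFunLike.congr_fun (U_inv_comp' g) x)
      norm_map' := U_norm g }
  have e_apply : ∀ (g : G) (x : Completion (A →₀ ℂ)), e g x = U g x := fun _ _ => rfl
  let rep : G →* (Completion (A →₀ ℂ) ≃ₗᵢ[ℂ] Completion (A →₀ ℂ)) :=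
    MonoidHom.mk' e (by
      intro g h
      apply LinearIsometryEquiv.ext
      intro x
      show U (g * h) x = U g (U h x)
      rw [U_mul]
      rfl)
  have rep_apply : ∀ (g : G) (x : Completion (A →₀ ℂ)), rep g x = U g x := fun _ _ => rfl
  -- equivariance
  have equivar : ∀ (g : G) (α : A), rep g (lam α) = lam (g • α) := by
    intro g α
    rw [rep_apply]
    show U g ((single α 1 : A →₀ ℂ) : Completion (A →₀ ℂ)) = lam (g • α)
    rw [U_coe, mapDomain_single]
  -- density of the span of the range of lam
  have dsp : Dense (Submodule.span ℂ (Set.range lam) : Set (Completion (A →₀ ℂ))) := by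
    have hsub : Set.range ((↑) : (A →₀ ℂ) → Completion (A →₀ ℂ))
        ⊆ (Submodule.span ℂ (Set.range lam) : Set (Completion (A →₀ ℂ))) := by
      rintro - ⟨v, rfl⟩
      induction v using Finsupp.induction with
      | zero =>
        rw [Completion.coe_zero]
        exact (Submodule.span ℂ (Set.range lam)).zero_mem
      | single_add a c f _ _ ih =>
        rw [Completion.coe_add]
        refine (Submodule.span ℂ (Set.range lam)).add_mem ?_ ih
        have hsc : ((single a c : A →₀ ℂ) : Completion (A →₀ ℂ)) = c • lam a := by
          rw [← Completion.coe_smul]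
          congr 1
          rw [smul_single, smul_eq_mul, mul_one]
        rw [hsc]
        exact (Submodule.span ℂ (Set.range lam)).smul_mem c
          (Submodule.subset_span ⟨a, rfl⟩)
    exact Completion.denseRange_coe.mono hsub
  -- separability
  haveI hsepH : TopologicalSpace.SeparableSpace (Completion (A →₀ ℂ)) := by
    have h1 : TopologicalSpace.IsSeparable (Set.range lam) :=
      TopologicalSpace.isSeparable_range lam_cont
    have h2 := (h1.span (R := ℂ)).closure
    rw [dsp.closure_eq] at h2
    exact TopologicalSpace.isSeparable_univ_iff.1 h2
  -- strong continuity
  have repc : ∀ x : Completion (A →₀ ℂ), Continuous fun g : G => rep g x := by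
    intro x
    have : Continuous fun g : G => U g x := by
      refine strong_cont U U_norm (Set.range lam) dsp ?_ x
      rintro - ⟨α, rfl⟩
      have hfe : (fun g : G => U g (lam α)) = fun g : G => lam (g • α) := by
        funext g
        rw [← rep_apply, equivar]
      rw [hfe]
      exact lam_cont.comp (continuous_id.smul continuous_const)
    simpa only [rep_apply] using this
  exact ⟨{ H := Completion (A →₀ ℂ)
           lam := lam
           rep := rep
           lam_continuous := lam_cont
           dense_span := dsp
           rep_continuous := repc
           inner_lam := inner_lam
           equivariant := equivar }⟩
end

section
/- Let H_S be a complex Hilbert space, d ≥ 1, and let {L_β^α : α, β ∈ {0, 1, ..., d}} be bounded operators on H_S satisfying, for every α, β ∈ {0, 1, ..., d}: L_β^α + (L_α^β)† + Σ_{i=1}^d (L_α^i)† L_β^i = 0 and L_β^α + (L_α^β)† + Σ_{i=1}^d L_i^α (L_i^β)† = 0. Then there exist bounded operators L_1, ..., L_d on H_S, a bounded selfadjoint operator H on H_S, and bounded operators S_j^i (i, j ∈ {1, ..., d}) on H_S such that the block operator matrix ((S_j^i)) acting on H_S ⊗ ℂ^d is unitary, and L_j^i = S_j^i − δ_j^i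 I for i, j ∈ {1, ..., d}, L_0^i = L_i for 1 ≤ i ≤ d, L_j^0 = −Σ_{k=1}^d L_k† S_j^k for 1 ≤ j ≤ d, and L_0^0 = −(iH + ½ Σ_{k=1}^d L_k† L_k). -/
open scoped InnerProductSpace

set_option maxHeartbeats 1600000 in
/-- **Hudson–Parthasarathy structure of unitarity conditions.**
Let `L α β` (for `α β ∈ {0,1,…,d}`, with `L α β` playing the role of `L_β^α`) be bounded
operators on a complex Hilbert space `Hs` satisfying the two unitarity conditions
`L_β^α + (L_α^β)† + Σᵢ (L_α^i)† L_β^i = 0` and `L_β^α + (L_α^β)† + Σᵢ L_i^α (L_i^β)† = 0`.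
Then there are bounded operators `L₁, …, L_d`, a bounded selfadjoint `H`, and operators
`S_j^i` whose block operator matrix on `Hs ⊗ ℂᵈ` (realized as the Hilbert space
`PiLp 2 (fun _ : Fin d => Hs)`) is unitary, such that `L_j^i = S_j^i - δ_j^i`,
`L_0^i = L_i`, `L_j^0 = -Σ_k L_k† S_j^k` and `L_0^0 = -(iH + ½ Σ_k L_k† L_k)`. -/
theorem hudson_parthasarathy_structure {Hs : Type*} [NormedAddCommGroup Hs]
    [InnerProductSpace ℂ Hs] [CompleteSpace Hs] (d : ℕ) (hd : 1 ≤ d)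
    (L : Fin (d + 1) → Fin (d + 1) → (Hs →L[ℂ] Hs))
    (h1 : ∀ α β : Fin (d + 1),
      L α β + ContinuousLinearMap.adjoint (L β α)
        + ∑ i : Fin d, ContinuousLinearMap.adjoint (L i.succ α) ∘L L i.succ β = 0)
    (h2 : ∀ α β : Fin (d + 1),
      L α β + ContinuousLinearMap.adjoint (L β α)
        + ∑ i : Fin d, L α i.succ ∘L ContinuousLinearMap.adjoint (L β i.succ) = 0) :
    ∃ (Lv : Fin d → (Hs →L[ℂ] Hs)) (H : Hs →L[ℂ] Hs)
      (S : Fin d → Fin d → (Hs →L[ℂ] Hs)),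
      IsSelfAdjoint H ∧
      (∃ U : (PiLp 2 fun _ : Fin d => Hs) ≃ₗᵢ[ℂ] (PiLp 2 fun _ : Fin d => Hs),
        ∀ (x : PiLp 2 fun _ : Fin d => Hs) (i : Fin d), U x i = ∑ j : Fin d, S i j (x j)) ∧
      (∀ i j : Fin d, L i.succ j.succ = S i j - if i = j then 1 else 0) ∧
      (∀ i : Fin d, L i.succ 0 = Lv i) ∧
      (∀ j : Fin d, L 0 j.succ
          = -∑ k : Fin d, ContinuousLinearMap.adjoint (Lv k) ∘L S k j) ∧
      L 0 0 = -(Complex.I • H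
          + (1 / 2 : ℂ) • ∑ k : Fin d, ContinuousLinearMap.adjoint (Lv k) ∘L Lv k) := by
  classical
  have h1' : ∀ α β : Fin (d + 1), L α β + star (L β α)
      + ∑ i : Fin d, star (L i.succ α) * L i.succ β = 0 := by
    intro α β
    simpa [ContinuousLinearMap.star_eq_adjoint, ContinuousLinearMap.mul_def] using h1 α β
  have h2' : ∀ α β : Fin (d + 1), L α β + star (L β α)
      + ∑ i : Fin d, L α i.succ * star (L β i.succ) = 0 := by
    intro α β
    simpa [ContinuousLinearMap.star_eq_adjoint, ContinuousLinearMap.mul_def] using h2 α β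
  set S : Fin d → Fin d → (Hs →L[ℂ] Hs) :=
    fun i j => L i.succ j.succ + (if i = j then 1 else 0) with hSdef
  set Lv : Fin d → (Hs →L[ℂ] Hs) := fun i => L i.succ 0 with hLvdef
  set K : Hs →L[ℂ] Hs := ∑ k : Fin d, star (Lv k) * Lv k with hKdef
  have h00 : L 0 0 + star (L 0 0) + K = 0 := h1' 0 0
  set Hop : Hs →L[ℂ] Hs := Complex.I • L 0 0 + (Complex.I / 2) • K with hHdef
  have hstar_ite : ∀ (i j : Fin d),
      star (if i = j then (1 : Hs →L[ℂ] Hs) else 0) = if i = j then 1 else 0 := by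
    intro i j; split <;> simp
  have key1 : ∀ i j : Fin d,
      (∑ k : Fin d, star (S k i) * S k j) = if i = j then 1 else 0 := by
    intro i j
    have h := h1' i.succ j.succ
    have expand : (∑ k : Fin d, star (S k i) * S k j)
        = (L i.succ j.succ + star (L j.succ i.succ)
            + ∑ k : Fin d, star (L k.succ i.succ) * L k.succ j.succ)
          + (if j = i then 1 else 0) := by
      simp only [hSdef, star_add, hstar_ite, add_mul, mul_add, Finset.sum_add_distrib,
        ite_mul, mul_ite, one_mul, mul_one, zero_mul, mul_zero,
        Finset.sum_ite_eq, Finset.sum_ite_eq', Finset.mem_univ, if_true]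
      abel
    rw [expand, h, zero_add]
    simp [eq_comm]
  have key2 : ∀ i j : Fin d,
      (∑ k : Fin d, S i k * star (S j k)) = if i = j then 1 else 0 := by
    intro i j
    have h := h2' i.succ j.succ
    have expand : (∑ k : Fin d, S i k * star (S j k))
        = (L i.succ j.succ + star (L j.succ i.succ)
            + ∑ k : Fin d, L i.succ k.succ * star (L j.succ k.succ))
          + (if i = j then 1 else 0) := by
      simp only [hSdef, star_add, hstar_ite, add_mul, mul_add, Finset.sum_add_distrib,
        ite_mul, mul_ite, one_mul, mul_one, zero_mul, mul_zero,
        Finset.sum_ite_eq, Finset.sum_ite_eq', Finset.mem_univ, if_true]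
      abel
    rw [expand, h, zero_add]
  have key1comp : ∀ i j : Fin d,
      (∑ k : Fin d, ContinuousLinearMap.adjoint (S k i) ∘L S k j)
        = if i = j then 1 else 0 := by
    intro i j
    simpa [ContinuousLinearMap.star_eq_adjoint, ContinuousLinearMap.mul_def] using key1 i j
  have key2comp : ∀ i j : Fin d,
      (∑ k : Fin d, S i k ∘L ContinuousLinearMap.adjoint (S j k))
        = if i = j then 1 else 0 := by
    intro i j
    simpa [ContinuousLinearMap.star_eq_adjoint, ContinuousLinearMap.mul_def] using key2 i j
  refine ⟨Lv, Hop, S, ?_, ?_, ?_, ?_, ?_, ?_⟩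
  · -- self-adjointness of Hop
    have hK : star K = K := by
      rw [hKdef, star_sum]
      simp [star_mul, star_star]
    have hstarL00 : star (L 0 0) = -(L 0 0) - K := by
      calc star (L 0 0) = (L 0 0 + star (L 0 0) + K) - L 0 0 - K := by abel
        _ = -(L 0 0) - K := by rw [h00]; abel
    rw [isSelfAdjoint_iff, hHdef, star_add, star_smul, star_smul, hstarL00, hK]
    simp only [Complex.star_def, map_div₀, Complex.conj_I, Complex.conj_ofNat]
    module
  · -- the unitary
    have aux_ite : ∀ (c : Prop) [Decidable c] (v : Hs),
        (if c then (1 : Hs →L[ℂ] Hs) else 0) v = if c then v else 0 := by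
      intro c _ v; split <;> simp
    let T : (PiLp 2 fun _ : Fin d => Hs) ≃ₗ[ℂ] (PiLp 2 fun _ : Fin d => Hs) :=
      { toFun := fun x => WithLp.toLp 2 (fun i => ∑ j : Fin d, S i j (x j))
        invFun := fun y => WithLp.toLp 2 (fun j => ∑ i : Fin d, ContinuousLinearMap.adjoint (S i j) (y i))
        map_add' := by
          intro x y; ext i
          simp [PiLp.add_apply, Finset.sum_add_distrib]
        map_smul' := by
          intro c x; ext i
          simp [PiLp.smul_apply, Finset.smul_sum]
        left_inv := by
          intro x; ext j
          show (∑ i : Fin d, ContinuousLinearMap.adjoint (S i j)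
              (∑ k : Fin d, S i k (x k))) = x j
          calc (∑ i : Fin d, ContinuousLinearMap.adjoint (S i j)
                (∑ k : Fin d, S i k (x k)))
              = ∑ k : Fin d, (∑ i : Fin d,
                  ContinuousLinearMap.adjoint (S i j) ∘L S i k) (x k) := by
                simp only [map_sum, ContinuousLinearMap.sum_apply,
                  ContinuousLinearMap.comp_apply]
                exact Finset.sum_comm
            _ = ∑ k : Fin d, (if j = k then (1 : Hs →L[ℂ] Hs) else 0) (x k) := by
                simp_rw [key1comp]
            _ = x j := by simp [aux_ite]
        right_inv := by
          intro y; ext i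
          show (∑ j : Fin d, S i j
              (∑ k : Fin d, ContinuousLinearMap.adjoint (S k j) (y k))) = y i
          calc (∑ j : Fin d, S i j
                (∑ k : Fin d, ContinuousLinearMap.adjoint (S k j) (y k)))
              = ∑ k : Fin d, (∑ j : Fin d,
                  S i j ∘L ContinuousLinearMap.adjoint (S k j)) (y k) := by
                simp only [map_sum, ContinuousLinearMap.sum_apply,
                  ContinuousLinearMap.comp_apply]
                exact Finset.sum_comm
            _ = ∑ k : Fin d, (if i = k then (1 : Hs →L[ℂ] Hs) else 0) (y k) := by
                simp_rw [key2comp]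
            _ = y i := by simp [aux_ite] }
    have hinner : ∀ x y : (PiLp 2 fun _ : Fin d => Hs),
        ⟪T x, T y⟫_ℂ = ⟪x, y⟫_ℂ := by
      intro x y
      rw [PiLp.inner_apply, PiLp.inner_apply]
      show (∑ i : Fin d, ⟪∑ j : Fin d, S i j (x j), ∑ k : Fin d, S i k (y k)⟫_ℂ)
        = ∑ i : Fin d, ⟪x i, y i⟫_ℂ
      calc (∑ i : Fin d, ⟪∑ j : Fin d, S i j (x j), ∑ k : Fin d, S i k (y k)⟫_ℂ)
          = ∑ i : Fin d, ∑ j : Fin d, ∑ k : Fin d,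
              ⟪S i j (x j), S i k (y k)⟫_ℂ := by
            simp_rw [sum_inner, inner_sum]
        _ = ∑ j : Fin d, ∑ k : Fin d, ∑ i : Fin d,
              ⟪S i j (x j), S i k (y k)⟫_ℂ := by
            rw [Finset.sum_comm]
            exact Finset.sum_congr rfl fun j _ => Finset.sum_comm
        _ = ∑ j : Fin d, ∑ k : Fin d,
              ⟪x j, (∑ i : Fin d, ContinuousLinearMap.adjoint (S i j) ∘L S i k)
                (y k)⟫_ℂ := by
            simp_rw [ContinuousLinearMap.sum_apply, inner_sum,
              ContinuousLinearMap.comp_apply, ContinuousLinearMap.adjoint_inner_right]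
        _ = ∑ j : Fin d, ∑ k : Fin d,
              ⟪x j, (if j = k then (1 : Hs →L[ℂ] Hs) else 0) (y k)⟫_ℂ := by
            simp_rw [key1comp]
        _ = ∑ i : Fin d, ⟪x i, y i⟫_ℂ := by
            have inner_ite : ∀ (a : Hs) (c : Prop) [Decidable c] (v : Hs),
                ⟪a, if c then v else 0⟫_ℂ = if c then ⟪a, v⟫_ℂ else 0 := by
              intro a c _ v; split <;> simp
            simp [aux_ite, inner_ite]
    exact ⟨T.isometryOfInner hinner, fun x i => rfl⟩
  · intro i j
    simp only [hSdef]
    rw [add_sub_cancel_right]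
  · intro i; rfl
  · intro j
    simp only [← ContinuousLinearMap.star_eq_adjoint, ← ContinuousLinearMap.mul_def]
    have h := h1' 0 j.succ
    have expand : (∑ k : Fin d, star (Lv k) * S k j)
        = star (L j.succ 0) + ∑ k : Fin d, star (L k.succ 0) * L k.succ j.succ := by
      simp only [hSdef, hLvdef, mul_add, Finset.sum_add_distrib, mul_ite, mul_one,
        mul_zero, Finset.sum_ite_eq, Finset.sum_ite_eq', Finset.mem_univ, if_true]
      abel
    rw [expand]
    calc L 0 j.succ
        = (L 0 j.succ + star (L j.succ 0)
            + ∑ k : Fin d, star (L k.succ 0) * L k.succ j.succ)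
          - (star (L j.succ 0) + ∑ k : Fin d, star (L k.succ 0) * L k.succ j.succ) := by
          abel
      _ = -(star (L j.succ 0) + ∑ k : Fin d, star (L k.succ 0) * L k.succ j.succ) := by
          rw [h]; abel
  · simp only [← ContinuousLinearMap.star_eq_adjoint, ← ContinuousLinearMap.mul_def,
      ← hKdef, hHdef]
    have hc : Complex.I * (Complex.I / 2) = -(1 / 2 : ℂ) := by
      rw [← mul_div_assoc, Complex.I_mul_I]; norm_num
    rw [smul_add, smul_smul, smul_smul, Complex.I_mul_I, hc]
    simp only [neg_smul, one_smul]
    abel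
end

section
/- Let μ be a finite (nonzero or zero) Borel measure on ℝ. Then there exists a Borel probability measure ν on ℝ whose characteristic function is t ↦ exp(∫_ℝ (e^{itx} − 1) μ(dx)), and ν is infinitely divisible: for every positive integer k there exists a probability measure ν_k on ℝ whose k-fold convolution power equals ν. -/
open MeasureTheory

/-- Convolution of two Borel measures on `ℝ`: the pushforward of the product measure
under addition. -/
noncomputable def mconv (μ ν : Measure ℝ) : Measure ℝ :=
  (μ.prod ν).map fun p => p.1 + p.2

/-- `k`-fold convolution power of a measure on `ℝ` (the `0`-th power is `δ₀`). -/
noncomputable def convPow (μ : Measure ℝ) : ℕ → Measure ℝ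
  | 0 => Measure.dirac 0
  | n + 1 => mconv μ (convPow μ n)

open scoped ENNReal

namespace CPAux

lemma mconv_eq_conv (μ ν : Measure ℝ) : mconv μ ν = Measure.conv μ ν := rfl

lemma convPow_finite (μ : Measure ℝ) [IsFiniteMeasure μ] :
    ∀ n, IsFiniteMeasure (convPow μ n)
  | 0 => by rw [convPow]; infer_instance
  | n + 1 => by
    haveI := convPow_finite μ n
    rw [convPow, mconv_eq_conv]
    infer_instance

lemma smul_prod' {α β : Type*} [MeasurableSpace α] [MeasurableSpace β]
    (c : ℝ≥0∞) (μ : Measure α) (ν : Measure β) [SFinite ν] :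
    (c • μ).prod ν = c • (μ.prod ν) := by
  ext s hs
  rw [Measure.prod_apply hs, Measure.smul_apply, Measure.prod_apply hs, smul_eq_mul,
    lintegral_smul_measure]
  rfl

lemma prod_smul' {α β : Type*} [MeasurableSpace α] [MeasurableSpace β]
    (c : ℝ≥0∞) (μ : Measure α) (ν : Measure β) [SFinite ν] :
    μ.prod (c • ν) = c • (μ.prod ν) := by
  ext s hs
  rw [Measure.prod_apply hs, Measure.smul_apply, Measure.prod_apply hs, smul_eq_mul,
    ← lintegral_const_mul _ (measurable_measure_prodMk_left hs)]
  simp only [Measure.smul_apply, smul_eq_mul]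

lemma smul_mconv_smul (c d : ℝ≥0∞) (μ ν : Measure ℝ) [SFinite μ] [SFinite ν] :
    mconv (c • μ) (d • ν) = (c * d) • mconv μ ν := by
  rw [mconv, smul_prod', prod_smul', smul_smul, Measure.map_smul, mconv]

lemma dirac_mconv (ν : Measure ℝ) [SFinite ν] : mconv (Measure.dirac 0) ν = ν := by
  rw [mconv_eq_conv]
  exact Measure.dirac_zero_conv ν

lemma mconv_assoc (μ ν ρ : Measure ℝ) [SFinite μ] [SFinite ν] [SFinite ρ] :
    mconv (mconv μ ν) ρ = mconv μ (mconv ν ρ) := by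
  have hadd : Measurable fun p : ℝ × ℝ => p.1 + p.2 := measurable_add
  rw [mconv, mconv, mconv, mconv]
  conv_lhs => rw [show ρ = Measure.map id ρ from (Measure.map_id).symm]
  rw [Measure.map_prod_map _ _ hadd measurable_id,
    Measure.map_map hadd (hadd.prodMap measurable_id)]
  conv_rhs => rw [show μ = Measure.map id μ from (Measure.map_id).symm]
  rw [Measure.map_prod_map _ _ measurable_id hadd,
    Measure.map_map hadd (measurable_id.prodMap hadd),
    ← Measure.prodAssoc_prod,
    Measure.map_map (hadd.comp (measurable_id.prodMap hadd))
      MeasurableEquiv.prodAssoc.measurable]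
  congr 1
  funext p
  simp [Prod.map, MeasurableEquiv.prodAssoc, add_assoc]

end CPAux

namespace CPAux

lemma convPow_mconv (μ : Measure ℝ) [IsFiniteMeasure μ] (n m : ℕ) :
    mconv (convPow μ n) (convPow μ m) = convPow μ (n + m) := by
  haveI := convPow_finite μ m
  induction n with
  | zero =>
    rw [convPow, dirac_mconv, Nat.zero_add]
  | succ n ih =>
    haveI := convPow_finite μ n
    rw [convPow, mconv_assoc, ih, Nat.succ_add, convPow]

lemma convPow_univ (μ : Measure ℝ) [IsFiniteMeasure μ] (n : ℕ) :
    convPow μ n Set.univ = (μ Set.univ) ^ n := by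
  induction n with
  | zero => simp [convPow]
  | succ n ih =>
    haveI := convPow_finite μ n
    rw [convPow, mconv, Measure.map_apply measurable_add MeasurableSet.univ,
      Set.preimage_univ, ← Set.univ_prod_univ, Measure.prod_prod, ih, pow_succ]
    ring

/-- Poisson weight. -/
noncomputable def qcoef (a s : ℝ) (n : ℕ) : ℝ :=
  Real.exp (-(s * a)) * s ^ n / n.factorial

lemma qcoef_nonneg {a s : ℝ} (hs : 0 ≤ s) (n : ℕ) : 0 ≤ qcoef a s n := by
  unfold qcoef; positivity

lemma qcoef_antidiagonal (a s t : ℝ) (N : ℕ) :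
    ∑ p ∈ Finset.HasAntidiagonal.antidiagonal N, qcoef a s p.1 * qcoef a t p.2 = qcoef a (s + t) N := by
  rw [Finset.Nat.sum_antidiagonal_eq_sum_range_succ (fun n m => qcoef a s n * qcoef a t m)]
  have hexp : Real.exp (-(s * a)) * Real.exp (-(t * a)) = Real.exp (-((s + t) * a)) := by
    rw [← Real.exp_add]; ring_nf
  have : ∀ k ∈ Finset.range (N + 1),
      qcoef a s k * qcoef a t (N - k)
        = Real.exp (-((s + t) * a)) / N.factorial * (s ^ k * t ^ (N - k) * (N.choose k)) := by
    intro k hk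
    have hkN : k ≤ N := Nat.lt_succ_iff.mp (Finset.mem_range.mp hk)
    have hfac : (N.choose k : ℝ) * k.factorial * (N - k).factorial = N.factorial := by
      exact_mod_cast congrArg Nat.cast (Nat.choose_mul_factorial_mul_factorial hkN)
    unfold qcoef
    set E1 := Real.exp (-(s * a)) with hE1
    set E2 := Real.exp (-(t * a)) with hE2
    have hexp2 : Real.exp (-((s + t) * a)) = E1 * E2 := by
      rw [hE1, hE2, ← Real.exp_add]; ring_nf
    rw [hexp2]
    have h1 : (k.factorial : ℝ) ≠ 0 := Nat.cast_ne_zero.mpr k.factorial_ne_zero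
    have h2 : ((N - k).factorial : ℝ) ≠ 0 := Nat.cast_ne_zero.mpr (N - k).factorial_ne_zero
    have h3 : (N.factorial : ℝ) ≠ 0 := Nat.cast_ne_zero.mpr N.factorial_ne_zero
    field_simp
    linear_combination (-(s ^ k * E1 * t ^ (N - k) * E2)) * hfac
  rw [Finset.sum_congr rfl this, ← Finset.mul_sum]
  unfold qcoef
  rw [add_pow]
  ring

end CPAux

namespace CPAux

/-- Compound Poisson measure with intensity `s • μ` (as a formal series). -/
noncomputable def cpQ (μ : Measure ℝ) (s : ℝ) : Measure ℝ :=
  Measure.sum fun n => ENNReal.ofReal (qcoef (μ Set.univ).toReal s n) • convPow μ n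

lemma cpQ_univ (μ : Measure ℝ) [IsFiniteMeasure μ] {s : ℝ} (hs : 0 ≤ s) :
    cpQ μ s Set.univ = 1 := by
  set a := (μ Set.univ).toReal with ha
  have ha0 : 0 ≤ a := ENNReal.toReal_nonneg
  have hμ : μ Set.univ = ENNReal.ofReal a := (ENNReal.ofReal_toReal (measure_ne_top μ _)).symm
  rw [cpQ, Measure.sum_apply _ MeasurableSet.univ]
  have hterm : ∀ n : ℕ,
      (ENNReal.ofReal (qcoef a s n) • convPow μ n) Set.univ
        = ENNReal.ofReal (qcoef a s n * a ^ n) := by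
    intro n
    rw [Measure.smul_apply, smul_eq_mul, convPow_univ, hμ, ← ENNReal.ofReal_pow ha0,
      ← ENNReal.ofReal_mul (qcoef_nonneg hs n)]
  simp_rw [← ha, hterm]
  have hsummand : ∀ n : ℕ, qcoef a s n * a ^ n
      = Real.exp (-(s * a)) * ((s * a) ^ n / n.factorial) := by
    intro n; unfold qcoef; rw [mul_pow]; ring
  have hsumm : Summable fun n : ℕ => qcoef a s n * a ^ n := by
    simp_rw [hsummand]
    exact ((Real.summable_pow_div_factorial (s * a)).mul_left _)
  rw [← ENNReal.ofReal_tsum_of_nonneg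
    (fun n => mul_nonneg (qcoef_nonneg hs n) (pow_nonneg ha0 n)) hsumm]
  have : ∑' n : ℕ, qcoef a s n * a ^ n = 1 := by
    simp_rw [hsummand]
    rw [tsum_mul_left]
    have hexp : ∑' n : ℕ, (s * a) ^ n / (n.factorial : ℝ) = Real.exp (s * a) := by
      rw [Real.exp_eq_exp_ℝ, NormedSpace.exp_eq_tsum_div]
    rw [hexp, ← Real.exp_add]
    simp
  rw [this, ENNReal.ofReal_one]

lemma cpQ_zero (μ : Measure ℝ) [IsFiniteMeasure μ] : cpQ μ 0 = Measure.dirac 0 := by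
  ext s hs
  rw [cpQ, Measure.sum_apply _ hs, tsum_eq_single 0 ?_]
  · simp [qcoef, convPow, Measure.dirac_apply' _ hs]
  · intro n hn
    match n, hn with
    | n + 1, _ => simp [qcoef]

lemma mconv_cpQ (μ : Measure ℝ) [IsFiniteMeasure μ] {s t : ℝ} (hs : 0 ≤ s) (ht : 0 ≤ t) :
    mconv (cpQ μ s) (cpQ μ t) = cpQ μ (s + t) := by
  haveI : ∀ n, IsFiniteMeasure (convPow μ n) := convPow_finite μ
  set a := (μ Set.univ).toReal with ha
  have key : ∀ p : ℕ × ℕ,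
      Measure.map (fun x : ℝ × ℝ => x.1 + x.2)
        ((ENNReal.ofReal (qcoef a s p.1) • convPow μ p.1).prod
          (ENNReal.ofReal (qcoef a t p.2) • convPow μ p.2))
        = (ENNReal.ofReal (qcoef a s p.1) * ENNReal.ofReal (qcoef a t p.2))
            • convPow μ (p.1 + p.2) := by
    intro p
    rw [show Measure.map (fun x : ℝ × ℝ => x.1 + x.2)
        ((ENNReal.ofReal (qcoef a s p.1) • convPow μ p.1).prod
          (ENNReal.ofReal (qcoef a t p.2) • convPow μ p.2))
        = mconv (ENNReal.ofReal (qcoef a s p.1) • convPow μ p.1)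
            (ENNReal.ofReal (qcoef a t p.2) • convPow μ p.2) from rfl,
      smul_mconv_smul, convPow_mconv]
  rw [cpQ, cpQ, mconv, Measure.prod_sum,
    Measure.map_sum measurable_add.aemeasurable]
  simp_rw [← ha, key]
  ext u hu
  rw [Measure.sum_apply _ hu, cpQ, Measure.sum_apply _ hu]
  simp_rw [Measure.smul_apply, smul_eq_mul]
  rw [← Finset.HasAntidiagonal.sigmaAntidiagonalEquivProd.tsum_eq
    (fun p : ℕ × ℕ => ENNReal.ofReal (qcoef a s p.1) * ENNReal.ofReal (qcoef a t p.2)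
      * convPow μ (p.1 + p.2) u), ENNReal.tsum_sigma']
  refine tsum_congr fun N => ?_
  have : ∀ q : {x // x ∈ Finset.HasAntidiagonal.antidiagonal N},
      (ENNReal.ofReal (qcoef a s (Finset.HasAntidiagonal.sigmaAntidiagonalEquivProd ⟨N, q⟩).1)
        * ENNReal.ofReal (qcoef a t (Finset.HasAntidiagonal.sigmaAntidiagonalEquivProd ⟨N, q⟩).2)
        * convPow μ ((Finset.HasAntidiagonal.sigmaAntidiagonalEquivProd ⟨N, q⟩).1
            + (Finset.HasAntidiagonal.sigmaAntidiagonalEquivProd ⟨N, q⟩).2) u)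
      = ENNReal.ofReal (qcoef a s (q : ℕ × ℕ).1 * qcoef a t (q : ℕ × ℕ).2) * convPow μ N u := by
    rintro ⟨⟨n, m⟩, hq⟩
    have hnm : n + m = N := Finset.HasAntidiagonal.mem_antidiagonal.mp hq
    simp only [Finset.HasAntidiagonal.sigmaAntidiagonalEquivProd_apply]
    rw [ENNReal.ofReal_mul (qcoef_nonneg hs n), hnm]
  rw [tsum_congr this, ENNReal.tsum_mul_right,
    Finset.tsum_subtype (Finset.HasAntidiagonal.antidiagonal N)
      (fun p : ℕ × ℕ => ENNReal.ofReal (qcoef a s p.1 * qcoef a t p.2)),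
    ← ENNReal.ofReal_sum_of_nonneg
      (fun p _ => mul_nonneg (qcoef_nonneg hs _) (qcoef_nonneg ht _)),
    qcoef_antidiagonal]

end CPAux

namespace CPAux

lemma convPow_cpQ (μ : Measure ℝ) [IsFiniteMeasure μ] {s : ℝ} (hs : 0 ≤ s) (k : ℕ) :
    convPow (cpQ μ s) k = cpQ μ (k * s) := by
  induction k with
  | zero =>
    rw [convPow, show ((0 : ℕ) : ℝ) * s = 0 by ring, cpQ_zero]
  | succ k ih =>
    rw [convPow, ih, mconv_cpQ μ hs (by positivity : (0:ℝ) ≤ (k : ℝ) * s)]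
    congr 1
    push_cast
    ring

lemma char_integrable (ρ : Measure ℝ) [IsFiniteMeasure ρ] (t : ℝ) :
    Integrable (fun x : ℝ => Complex.exp (Complex.I * t * x)) ρ := by
  have hc : Continuous fun x : ℝ => Complex.exp (Complex.I * t * x) := by
    fun_prop
  refine (integrable_const (1 : ℝ)).mono' hc.aestronglyMeasurable ?_
  filter_upwards with x
  rw [Complex.norm_exp]
  simp [Complex.mul_re, Complex.mul_im]

lemma norm_char_le (t x : ℝ) : ‖Complex.exp (Complex.I * t * x)‖ ≤ 1 := by
  rw [Complex.norm_exp]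
  simp [Complex.mul_re, Complex.mul_im]

lemma char_convPow (μ : Measure ℝ) [IsFiniteMeasure μ] (t : ℝ) (n : ℕ) :
    ∫ x : ℝ, Complex.exp (Complex.I * t * x) ∂(convPow μ n)
      = (∫ x : ℝ, Complex.exp (Complex.I * t * x) ∂μ) ^ n := by
  induction n with
  | zero => simp [convPow]
  | succ n ih =>
    haveI := convPow_finite μ n
    rw [convPow, mconv, integral_map measurable_add.aemeasurable
      ((by fun_prop : Continuous fun x : ℝ => Complex.exp (Complex.I * t * x)).aestronglyMeasurable)]
    have : ∀ p : ℝ × ℝ, Complex.exp (Complex.I * t * (p.1 + p.2 : ℝ))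
        = Complex.exp (Complex.I * t * p.1) * Complex.exp (Complex.I * t * p.2) := by
      intro p
      rw [← Complex.exp_add]
      push_cast
      ring_nf
    simp_rw [this]
    rw [integral_prod_mul (fun x : ℝ => Complex.exp (Complex.I * t * x))
      (fun x : ℝ => Complex.exp (Complex.I * t * x)), ih, pow_succ]
    ring

lemma char_cpQ (μ : Measure ℝ) [IsFiniteMeasure μ] (t : ℝ) :
    ∫ x : ℝ, Complex.exp (Complex.I * t * x) ∂(cpQ μ 1)
      = Complex.exp (∫ x : ℝ, (Complex.exp (Complex.I * t * x) - 1) ∂μ) := by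
  haveI : ∀ n, IsFiniteMeasure (convPow μ n) := convPow_finite μ
  haveI : IsProbabilityMeasure (cpQ μ 1) := ⟨cpQ_univ μ zero_le_one⟩
  set a := (μ Set.univ).toReal with ha
  set φ := ∫ x : ℝ, Complex.exp (Complex.I * t * x) ∂μ with hφ
  have hint : Integrable (fun x : ℝ => Complex.exp (Complex.I * t * x)) (cpQ μ 1) :=
    char_integrable _ t
  rw [cpQ] at hint ⊢
  rw [integral_sum_measure hint]
  have hterm : ∀ n : ℕ,
      ∫ x : ℝ, Complex.exp (Complex.I * t * x)
          ∂(ENNReal.ofReal (qcoef a 1 n) • convPow μ n)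
        = ((Real.exp (-a) / n.factorial : ℝ) : ℂ) * φ ^ n := by
    intro n
    rw [integral_smul_measure, char_convPow,
      ENNReal.toReal_ofReal (qcoef_nonneg zero_le_one n), Complex.real_smul]
    norm_num [qcoef]
    left; rfl
  rw [tsum_congr hterm]
  have hsplit : ∀ n : ℕ, ((Real.exp (-a) / n.factorial : ℝ) : ℂ) * φ ^ n
      = ((Real.exp (-a) : ℝ) : ℂ) * (φ ^ n / (n.factorial : ℂ)) := by
    intro n
    push_cast
    ring
  rw [tsum_congr hsplit, tsum_mul_left]
  have hexp : ∑' n : ℕ, φ ^ n / (n.factorial : ℂ) = Complex.exp φ := by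
    rw [Complex.exp_eq_exp_ℂ, NormedSpace.exp_eq_tsum_div]
  rw [hexp]
  have hsub : ∫ x : ℝ, (Complex.exp (Complex.I * t * x) - 1) ∂μ = φ - a := by
    rw [integral_sub (char_integrable μ t) (integrable_const 1), integral_const]
    simp [hφ, ha, Complex.real_smul, Measure.real]
  rw [hsub, Complex.ofReal_exp, ← Complex.exp_add]
  congr 1
  push_cast
  ring

end CPAux

/-- For any finite Borel measure `μ` on `ℝ` there is a Borel probability
measure `ν` with characteristic function `t ↦ exp (∫ (e^{itx} - 1) μ(dx))`, and `ν` is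
infinitely divisible: each `k ≥ 1` admits a probability measure `νk` whose `k`-fold
convolution power is `ν`. -/
theorem exists_compound_poisson (μ : Measure ℝ) [IsFiniteMeasure μ] :
    ∃ ν : Measure ℝ, IsProbabilityMeasure ν ∧
      (∀ t : ℝ, ∫ x : ℝ, Complex.exp (Complex.I * t * x) ∂ν
        = Complex.exp (∫ x : ℝ, (Complex.exp (Complex.I * t * x) - 1) ∂μ)) ∧
      ∀ k : ℕ, 0 < k → ∃ νk : Measure ℝ, IsProbabilityMeasure νk ∧ convPow νk k = ν := by
  refine ⟨CPAux.cpQ μ 1, ⟨CPAux.cpQ_univ μ zero_le_one⟩, fun t => CPAux.char_cpQ μ t,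
    fun k hk => ?_⟩
  have hk' : (0:ℝ) < (k : ℝ) := by exact_mod_cast hk
  refine ⟨CPAux.cpQ μ (1 / k), ⟨CPAux.cpQ_univ μ (by positivity)⟩, ?_⟩
  rw [CPAux.convPow_cpQ μ (by positivity) k]
  congr 1
  field_simp
end

section
/- Let K be a real 2n×2n matrix and let B : [0, ∞) → M_{2n}(ℝ) be a continuous family with B_0 = 0 satisfying the cocycle relations B_{t+s} = B_s + e^{sKᵀ} B_t e^{sK} for all s, t ≥ 0. Then there exists a real 2n×2n matrix C such that B_t = ∫_0^t e^{sKᵀ} C e^{sK} ds for all t ≥ 0. -/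
set_option maxHeartbeats 1000000
set_option synthInstance.maxHeartbeats 400000


open Matrix
open scoped MeasureTheory

section Abstract

open MeasureTheory intervalIntegral Set

/-- Translation of a `HasDerivWithinAt` statement. -/
private theorem shiftA {E : Type*} [NormedAddCommGroup E] [NormedSpace ℝ E]
    {φ : ℝ → E} {d : E} {c a : ℝ}
    (h : HasDerivWithinAt φ d (Set.Ici (a + c)) (a + c)) :
    HasDerivWithinAt (fun x => φ (x + c)) d (Set.Ici a) a := by
  have hi : HasDerivWithinAt (fun x : ℝ => x + c) 1 (Set.Ici a) a :=
    ((hasDerivAt_id a).add_const c).hasDerivWithinAt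
  have hmaps : Set.MapsTo (fun x : ℝ => x + c) (Set.Ici a) (Set.Ici (a + c)) :=
    fun x (hx : a ≤ x) => show a + c ≤ x + c by linarith
  simpa [Function.comp_def] using HasDerivWithinAt.scomp a h hi hmaps

private theorem shiftB {E : Type*} [NormedAddCommGroup E] [NormedSpace ℝ E]
    {f : ℝ → E} {d : E} {t : ℝ}
    (h : HasDerivWithinAt (fun u => f (t + u)) d (Set.Ici 0) 0) :
    HasDerivWithinAt f d (Set.Ici t) t := by
  have hi : HasDerivWithinAt (fun x : ℝ => x - t) 1 (Set.Ici t) t := by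
    simpa using ((hasDerivAt_id t).sub_const t).hasDerivWithinAt
  have hmaps : Set.MapsTo (fun x : ℝ => x - t) (Set.Ici t) (Set.Ici (0 : ℝ)) :=
    fun x (hx : t ≤ x) => show (0:ℝ) ≤ x - t from sub_nonneg.mpr hx
  have := HasDerivWithinAt.scomp_of_eq t h hi hmaps (by simp)
  have hfun : ((fun u => f (t + u)) ∘ fun x : ℝ => x - t) = f := by
    funext x; simp [Function.comp]
  rw [hfun] at this
  simpa using this

/-- Abstract form of the cocycle theorem in a Banach space. -/
theorem cocycle_key {E : Type*} [NormedAddCommGroup E] [NormedSpace ℝ E] [CompleteSpace E]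
    (A : ℝ → (E →L[ℝ] E)) (hAcont : Continuous A) (hA0 : A 0 = 1)
    (f : ℝ → E) (hf : ContinuousOn f (Set.Ici 0)) (hf0 : f 0 = 0)
    (hco : ∀ s t : ℝ, 0 ≤ s → 0 ≤ t → f (t + s) = f s + A s (f t)) :
    ∃ c : E, ∀ t : ℝ, 0 ≤ t → f t = ∫ s in (0:ℝ)..t, A s c := by
  -- integrability of f on subintervals of [0, ∞)
  have hsub : ∀ a b : ℝ, 0 ≤ a → 0 ≤ b → Set.uIcc a b ⊆ Set.Ici (0:ℝ) := by
    intro a b ha hb x hx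
    exact le_trans (le_inf ha hb) hx.1
  have hfint : ∀ a b : ℝ, 0 ≤ a → 0 ≤ b → IntervalIntegrable f volume a b :=
    fun a b ha hb => (hf.mono (hsub a b ha hb)).intervalIntegrable
  have hA_int : ∀ a b : ℝ, IntervalIntegrable A volume a b :=
    fun a b => hAcont.intervalIntegrable a b
  set u : ℝ → (E →L[ℝ] E) := fun h => ∫ s in (0:ℝ)..h, A s with hu_def
  set g : ℝ → E := fun t => ∫ s in (0:ℝ)..t, f s with hg_def
  -- derivative of u at 0 is A 0 = 1
  have hder : HasDerivAt u (A 0) 0 :=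
    intervalIntegral.integral_hasDerivAt_right (hA_int 0 0)
      (hAcont.stronglyMeasurable.stronglyMeasurableAtFilter) hAcont.continuousAt
  -- pick h > 0 with u h a unit
  obtain ⟨h, hh, hM⟩ : ∃ h : ℝ, 0 < h ∧ IsUnit (u h) := by
    have hslope : Filter.Tendsto (slope u 0) (nhdsWithin 0 {(0:ℝ)}ᶜ) (nhds 1) := by
      rw [← hA0]; exact hasDerivAt_iff_tendsto_slope.mp hder
    have hslope' : Filter.Tendsto (slope u 0) (nhdsWithin 0 (Set.Ioi 0)) (nhds 1) :=
      hslope.mono_left (nhdsWithin_mono 0 (fun x hx => ne_of_gt hx))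
    have hunits : {x : E →L[ℝ] E | IsUnit x} ∈ nhds (1 : E →L[ℝ] E) :=
      Units.isOpen.mem_nhds isUnit_one
    have hev : ∀ᶠ x in nhdsWithin 0 (Set.Ioi 0), IsUnit (slope u 0 x) :=
      hslope' hunits
    have hevu : ∀ᶠ x in nhdsWithin (0:ℝ) (Set.Ioi 0), 0 < x ∧ IsUnit (u x) := by
      filter_upwards [hev, self_mem_nhdsWithin] with x hx hx'
      refine ⟨hx', ?_⟩
      have hx0 : x ≠ 0 := ne_of_gt hx'
      have hs : slope u 0 x = x⁻¹ • u x := by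
        simp [slope, u, sub_zero, intervalIntegral.integral_same]
      rw [hs] at hx
      have hux : u x = x • (x⁻¹ • u x) := by
        rw [smul_smul, mul_inv_cancel₀ hx0, one_smul]
      set w := hx.unit with hw_def
      have hw : (↑w : E →L[ℝ] E) = x⁻¹ • u x := hx.unit_spec
      rw [hux, ← hw]
      refine isUnit_iff_exists.mpr ⟨x⁻¹ • (↑w⁻¹ : E →L[ℝ] E), ?_, ?_⟩
      · rw [smul_mul_smul_comm, mul_inv_cancel₀ hx0, w.mul_inv, one_smul]
      · rw [smul_mul_smul_comm, inv_mul_cancel₀ hx0, w.inv_mul, one_smul]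
    rcases hevu.exists with ⟨x, hx1, hx2⟩
    exact ⟨x, hx1, hx2⟩
  have hTMmul : (↑hM.unit⁻¹ : E →L[ℝ] E) * u h = 1 := hM.val_inv_mul
  set T : E →L[ℝ] E := ↑(hM.unit⁻¹) with hT_def
  have hTM : ∀ x : E, T ((u h) x) = x := by
    intro x
    have := congrArg (fun L : E →L[ℝ] E => L x) hTMmul
    simpa [ContinuousLinearMap.mul_apply] using this
  -- the key integral identity
  have hf_eq : ∀ t : ℝ, 0 ≤ t → f t = T (g (t + h) - g t - g h) := by
    intro t ht
    have e1 : (∫ s in (0:ℝ)..h, f (t + s)) = g (t + h) - g t := by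
      rw [intervalIntegral.integral_comp_add_left f t, add_zero]
      exact (intervalIntegral.integral_interval_sub_left
        (hfint 0 (t + h) le_rfl (by linarith)) (hfint 0 t le_rfl ht)).symm
    have e2 : (∫ s in (0:ℝ)..h, f (t + s)) = ∫ s in (0:ℝ)..h, (f s + A s (f t)) := by
      refine intervalIntegral.integral_congr (fun s hs => ?_)
      have hs0 : 0 ≤ s := le_trans (le_inf le_rfl hh.le) hs.1
      exact hco s t hs0 ht
    have hAft : Continuous fun s => A s (f t) :=
      (ContinuousLinearMap.apply ℝ E (f t)).continuous.comp hAcont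
    have e3 : (∫ s in (0:ℝ)..h, (f s + A s (f t)))
        = g h + ∫ s in (0:ℝ)..h, A s (f t) := by
      rw [intervalIntegral.integral_add (hfint 0 h le_rfl hh.le)
        (hAft.intervalIntegrable 0 h)]
    have e4 : (∫ s in (0:ℝ)..h, A s (f t)) = (u h) (f t) := by
      have := (ContinuousLinearMap.apply ℝ E (f t)).intervalIntegral_comp_comm (hA_int 0 h)
      simpa [hu_def] using this
    have : g (t + h) - g t - g h = (u h) (f t) := by
      rw [← e1, e2, e3, e4]; abel
    rw [this, hTM]
  -- derivative of g (FTC)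
  have hgderiv : ∀ b : ℝ, 0 ≤ b → HasDerivWithinAt g (f b) (Set.Ici b) b := by
    intro b hb
    have hmeas : StronglyMeasurableAtFilter f (nhdsWithin b (Set.Ioi b)) volume := by
      refine ⟨Set.Ici (0:ℝ), ?_, hf.aestronglyMeasurable measurableSet_Ici⟩
      exact Filter.mem_of_superset self_mem_nhdsWithin
        (fun x (hx : b < x) => le_of_lt (lt_of_le_of_lt hb hx))
    exact intervalIntegral.integral_hasDerivWithinAt_right (hfint 0 b le_rfl hb) hmeas
      ((hf.continuousWithinAt (Set.mem_Ici.2 hb)).mono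
        (fun x (hx : b < x) => le_of_lt (lt_of_le_of_lt hb hx)))
  -- derivative of f at 0 (from the right)
  set c : E := T (f h) with hc_def
  have hfd0 : HasDerivWithinAt f c (Set.Ici 0) 0 := by
    have d1 : HasDerivWithinAt (fun t => g (t + h)) (f h) (Set.Ici 0) 0 := by
      refine shiftA ?_
      have : (0:ℝ) + h = h := zero_add h
      rw [this]
      exact hgderiv h hh.le
    have d2 : HasDerivWithinAt g (f 0) (Set.Ici 0) 0 := by
      have := hgderiv 0 le_rfl
      exact this
    have d3 : HasDerivWithinAt (fun t => g (t + h) - g t - g h) (f h - f 0) (Set.Ici 0) 0 := by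
      simpa using (d1.sub d2).sub_const (g h)
    have d4 : HasDerivWithinAt (fun t => T (g (t + h) - g t - g h)) (T (f h - f 0))
        (Set.Ici 0) 0 := T.hasFDerivAt.comp_hasDerivWithinAt 0 d3
    have hval : T (f h - f 0) = c := by rw [hf0, sub_zero, hc_def]
    rw [hval] at d4
    exact d4.congr (fun x hx => hf_eq x hx) (hf_eq 0 le_rfl)
  -- derivative of f at t is A t c
  have hfd : ∀ t : ℝ, 0 ≤ t → HasDerivWithinAt f ((A t) c) (Set.Ici t) t := by
    intro t ht
    have d1 : HasDerivWithinAt (fun u => f t + (A t) (f u)) ((A t) c) (Set.Ici 0) 0 := by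
      have := (A t).hasFDerivAt.comp_hasDerivWithinAt (0:ℝ) hfd0
      exact this.const_add (f t)
    have d2 : HasDerivWithinAt (fun u => f (t + u)) ((A t) c) (Set.Ici 0) 0 := by
      refine d1.congr (fun x hx => ?_) ?_
      · rw [add_comm]; exact hco t x ht hx
      · rw [add_comm]; exact hco t 0 ht le_rfl
    exact shiftB d2
  refine ⟨c, fun t ht => ?_⟩
  have hcont2 : Continuous fun s => (A s) c :=
    (ContinuousLinearMap.apply ℝ E c).continuous.comp hAcont
  have hIcc : Set.Icc 0 t ⊆ Set.Ici (0:ℝ) := fun x hx => hx.1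
  have key := intervalIntegral.integral_eq_sub_of_hasDeriv_right_of_le ht
    (hf.mono hIcc)
    (fun x hx => ((hfd x hx.1.le).mono Set.Ioi_subset_Ici_self))
    (hcont2.intervalIntegrable 0 t)
  rw [key, hf0, sub_zero]

end Abstract

/-- If `B : [0,∞) → M_{2n}(ℝ)` is continuous with `B 0 = 0` and satisfies
the cocycle relations `B (t + s) = B s + e^{sKᵀ} B t e^{sK}` for all `s, t ≥ 0`, then
`B t = ∫_0^t e^{sKᵀ} C e^{sK} ds` (entrywise) for some real matrix `C`. -/
theorem cocycle_is_integral {n : ℕ}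
    (K : Matrix (Fin n ⊕ Fin n) (Fin n ⊕ Fin n) ℝ)
    (B : ℝ → Matrix (Fin n ⊕ Fin n) (Fin n ⊕ Fin n) ℝ)
    (hBcont : ContinuousOn B (Set.Ici (0 : ℝ)))
    (hB0 : B 0 = 0)
    (hcocycle : ∀ s t : ℝ, 0 ≤ s → 0 ≤ t →
      B (t + s) = B s + (NormedSpace.exp (s • K))ᵀ * B t * NormedSpace.exp (s • K)) :
    ∃ C : Matrix (Fin n ⊕ Fin n) (Fin n ⊕ Fin n) ℝ, ∀ t : ℝ, 0 ≤ t →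
      B t = Matrix.of fun i j => ∫ s in (0:ℝ)..t,
        (NormedSpace.exp (s • Kᵀ) * C * NormedSpace.exp (s • K)) i j := by
  classical
  letI : SeminormedRing (Matrix (Fin n ⊕ Fin n) (Fin n ⊕ Fin n) ℝ) :=
    Matrix.linftyOpSemiNormedRing
  letI : NormedRing (Matrix (Fin n ⊕ Fin n) (Fin n ⊕ Fin n) ℝ) :=
    Matrix.linftyOpNormedRing
  letI : NormedAlgebra ℝ (Matrix (Fin n ⊕ Fin n) (Fin n ⊕ Fin n) ℝ) :=
    Matrix.linftyOpNormedAlgebra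
  have hPcont : Continuous fun s : ℝ =>
      NormedSpace.exp (s • K) := by
    have h1 : Continuous fun X : Matrix (Fin n ⊕ Fin n) (Fin n ⊕ Fin n) ℝ =>
        NormedSpace.exp X :=
        continuous_iff_continuousAt.2 fun x => (NormedSpace.exp_analytic (𝕂 := ℝ) x).continuousAt
    exact h1.comp (continuous_id.smul continuous_const)
  set A : ℝ → (Matrix (Fin n ⊕ Fin n) (Fin n ⊕ Fin n) ℝ →L[ℝ]
      Matrix (Fin n ⊕ Fin n) (Fin n ⊕ Fin n) ℝ) := fun s =>
    (ContinuousLinearMap.mul ℝ (Matrix (Fin n ⊕ Fin n) (Fin n ⊕ Fin n) ℝ)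
        ((NormedSpace.exp (s • K))ᵀ)).comp
      ((ContinuousLinearMap.mul ℝ (Matrix (Fin n ⊕ Fin n) (Fin n ⊕ Fin n) ℝ)).flip
        (NormedSpace.exp (s • K)))
    with hA_def
  have hA_apply : ∀ s X, A s X = (NormedSpace.exp (s • K))ᵀ * X * NormedSpace.exp (s • K) := by
    intro s X
    simp [hA_def, mul_assoc, ContinuousLinearMap.comp_apply, ContinuousLinearMap.flip_apply,
      ContinuousLinearMap.mul_apply']
    rfl
  have h2 : Continuous fun s : ℝ =>
      ContinuousLinearMap.mul ℝ (Matrix (Fin n ⊕ Fin n) (Fin n ⊕ Fin n) ℝ)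
        ((NormedSpace.exp (s • K))ᵀ) :=
    (ContinuousLinearMap.mul ℝ (Matrix (Fin n ⊕ Fin n) (Fin n ⊕ Fin n) ℝ)).continuous.comp
      hPcont.matrix_transpose
  have h3 : Continuous fun s : ℝ =>
      (ContinuousLinearMap.mul ℝ (Matrix (Fin n ⊕ Fin n) (Fin n ⊕ Fin n) ℝ)).flip
        (NormedSpace.exp (s • K)) :=
    ((ContinuousLinearMap.mul ℝ (Matrix (Fin n ⊕ Fin n) (Fin n ⊕ Fin n) ℝ)).flip).continuous.comp
      hPcont
  have hAcont : Continuous A := h2.clm_comp h3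
  have hA0 : A 0 = 1 := by
    ext X i j
    rw [hA_apply]
    rw [show (0:ℝ) • K = 0 from zero_smul ℝ K, NormedSpace.exp_zero]
    simp
  have hco : ∀ s t : ℝ, 0 ≤ s → 0 ≤ t → B (t + s) = B s + A s (B t) := by
    intro s t hs ht
    rw [hA_apply, hcocycle s t hs ht]
  obtain ⟨c, hc⟩ := cocycle_key A hAcont hA0 B hBcont hB0 hco
  refine ⟨c, fun t ht => ?_⟩
  have hAc : ∀ s : ℝ, A s c = NormedSpace.exp (s • Kᵀ) * c * NormedSpace.exp (s • K) := by
    intro s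
    rw [hA_apply]
    rw [show s • Kᵀ = (s • K)ᵀ from (Matrix.transpose_smul s K).symm]
    rw [Matrix.exp_transpose (s • K)]
  have hint := by
    have : Continuous fun s => A s c :=
      (ContinuousLinearMap.apply ℝ (Matrix (Fin n ⊕ Fin n) (Fin n ⊕ Fin n) ℝ) c).continuous.comp
        hAcont
    exact this.intervalIntegrable (μ := MeasureTheory.volume) 0 t
  rw [hc t ht]
  ext i j
  set ℓ : Matrix (Fin n ⊕ Fin n) (Fin n ⊕ Fin n) ℝ →L[ℝ] ℝ := LinearMap.toContinuousLinearMap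
    { toFun := fun X : Matrix (Fin n ⊕ Fin n) (Fin n ⊕ Fin n) ℝ => X i j
      map_add' := fun X Y => rfl
      map_smul' := fun r X => rfl } with hl_def
  have hl_apply : ∀ X : Matrix (Fin n ⊕ Fin n) (Fin n ⊕ Fin n) ℝ, ℓ X = X i j := fun X => rfl
  have hswap := ℓ.intervalIntegral_comp_comm hint
  calc (∫ s in (0:ℝ)..t, A s c) i j
      = ℓ (∫ s in (0:ℝ)..t, A s c) := (hl_apply _).symm
    _ = ∫ s in (0:ℝ)..t, ℓ (A s c) := hswap.symm
    _ = ∫ s in (0:ℝ)..t,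
        (NormedSpace.exp (s • Kᵀ) * c * NormedSpace.exp (s • K)) i j := by
          refine intervalIntegral.integral_congr (fun s _ => ?_)
          rw [hl_apply, hAc]
    _ = Matrix.of (fun i j => ∫ s in (0:ℝ)..t,
        (NormedSpace.exp (s • Kᵀ) * c * NormedSpace.exp (s • K)) i j) i j := rfl
end

section
/- Let J denote the real 2n×2n matrix J = [[0, −I_n],[I_n, 0]], and let K, C be real 2n×2n matrices with C symmetric. Then the following are equivalent: (i) for every t ≥ 0, the complex Hermitian matrix ∫_0^t e^{sKᵀ} (C − i(KᵀJ + JK)) e^{sK} ds is positive semidefinite; (ii) the complex Hermitian matrix C + i(KᵀJ + JK) is positive semidefinite. -/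
open Matrix
open scoped MeasureTheory ComplexOrder

/-- The real `2n × 2n` matrix `J = [[0, -I_n], [I_n, 0]]`. -/
def Jmat (n : ℕ) : Matrix (Fin n ⊕ Fin n) (Fin n ⊕ Fin n) ℝ :=
  Matrix.fromBlocks 0 (-1) 1 0

attribute [local instance] Matrix.linftyOpNormedRing Matrix.linftyOpNormedAlgebra

namespace IntegralPSDaux

open NormedSpace intervalIntegral

variable {m : Type*} [Fintype m] [DecidableEq m]

/-- Entry evaluation as a continuous linear map. -/
noncomputable def entryCLM (i j : m) : Matrix m m ℂ →L[ℂ] ℂ :=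
  LinearMap.toContinuousLinearMap
    { toFun := fun M => M i j
      map_add' := fun _ _ => rfl
      map_smul' := fun _ _ => rfl }

/-- The quadratic form `M ↦ x† M x` as a continuous linear map in `M`. -/
noncomputable def quadCLM (x : m → ℂ) : Matrix m m ℂ →L[ℂ] ℂ :=
  LinearMap.toContinuousLinearMap
    { toFun := fun M => star x ⬝ᵥ (M *ᵥ x)
      map_add' := fun M N => by simp [add_mulVec, dotProduct_add]
      map_smul' := fun c M => by simp [smul_mulVec, dotProduct_smul] }

/-- Conjugate transpose as a continuous `ℝ`-linear map. -/
noncomputable def ctCLM : Matrix m m ℂ →L[ℝ] Matrix m m ℂ :=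
  LinearMap.toContinuousLinearMap
    { toFun := fun M => Mᴴ
      map_add' := fun M N => conjTranspose_add M N
      map_smul' := fun c M => by
        ext i j
        simp [conjTranspose_apply, star_smul] }

lemma of_integral {G : ℝ → Matrix m m ℂ} (hG : Continuous G) (a b : ℝ) :
    (Matrix.of fun i j => ∫ s in a..b, G s i j) = ∫ s in a..b, G s := by
  ext i j
  have h := (entryCLM (m := m) i j).intervalIntegral_comp_comm
    (μ := MeasureTheory.volume) (hG.intervalIntegrable a b)
  exact h

lemma quad_integral {G : ℝ → Matrix m m ℂ} (hG : Continuous G) (a b : ℝ) (x : m → ℂ) :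
    star x ⬝ᵥ ((∫ s in a..b, G s) *ᵥ x) = ∫ s in a..b, star x ⬝ᵥ (G s *ᵥ x) := by
  have h := (quadCLM (m := m) x).intervalIntegral_comp_comm
    (μ := MeasureTheory.volume) (hG.intervalIntegrable a b)
  exact h.symm

lemma ct_integral {G : ℝ → Matrix m m ℂ} (hG : Continuous G) (a b : ℝ) :
    (∫ s in a..b, G s)ᴴ = ∫ s in a..b, (G s)ᴴ := by
  have h := (ctCLM (m := m)).intervalIntegral_comp_comm
    (μ := MeasureTheory.volume) (hG.intervalIntegrable a b)
  exact h.symm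

lemma integral_nonneg_complex {f : ℝ → ℂ} (hf : Continuous f) {t : ℝ} (ht : 0 ≤ t)
    (h : ∀ s, 0 ≤ f s) : 0 ≤ ∫ s in (0:ℝ)..t, f s := by
  have hre : ∀ s, 0 ≤ (f s).re ∧ (f s).im = 0 := by
    intro s
    have := h s
    rw [Complex.le_def] at this
    exact ⟨by simpa using this.1, by simpa using this.2.symm⟩
  have hint := hf.intervalIntegrable (μ := MeasureTheory.volume) 0 t
  have h1 : (∫ s in (0:ℝ)..t, f s).re = ∫ s in (0:ℝ)..t, (f s).re :=
    (Complex.reCLM.intervalIntegral_comp_comm hint).symm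
  have h2 : (∫ s in (0:ℝ)..t, f s).im = ∫ s in (0:ℝ)..t, (f s).im :=
    (Complex.imCLM.intervalIntegral_comp_comm hint).symm
  rw [Complex.le_def]
  refine ⟨?_, ?_⟩
  · rw [Complex.zero_re, h1]
    exact intervalIntegral.integral_nonneg ht fun s _ => (hre s).1
  · rw [Complex.zero_im, h2]
    simp [(funext fun s => (hre s).2 : (fun s => (f s).im) = fun _ => 0)]

lemma nonneg_at_zero {u : ℝ → ℝ} (hu : Continuous u)
    (hI : ∀ t, 0 ≤ t → 0 ≤ ∫ s in (0:ℝ)..t, u s) : 0 ≤ u 0 := by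
  have hd : HasDerivAt (fun b => ∫ s in (0:ℝ)..b, u s) (u 0) 0 :=
    (hu.integral_hasStrictDerivAt 0 0).hasDerivAt
  have hdw := (hd.hasDerivWithinAt (s := Set.Ioi (0:ℝ)))
  rw [hasDerivWithinAt_iff_tendsto_slope] at hdw
  have hIoi : Set.Ioi (0:ℝ) \ {0} = Set.Ioi 0 :=
    Set.diff_singleton_eq_self (by simp)
  rw [hIoi] at hdw
  refine ge_of_tendsto hdw ?_
  filter_upwards [self_mem_nhdsWithin] with t (ht : t ∈ Set.Ioi (0:ℝ))
  have ht' : (0:ℝ) < t := ht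
  have h0 : (∫ s in (0:ℝ)..(0:ℝ), u s) = 0 := intervalIntegral.integral_same
  have : slope (fun b => ∫ s in (0:ℝ)..b, u s) 0 t
      = (∫ s in (0:ℝ)..t, u s) / t := by
    simp [slope_def_field, h0]
  rw [this]
  exact div_nonneg (hI t ht'.le) ht'.le

end IntegralPSDaux

open IntegralPSDaux NormedSpace

/-- For real `2n × 2n` matrices `K`, `C` with `C` symmetric, the complex
Hermitian matrices `∫_0^t e^{sKᵀ} (C - i(KᵀJ + JK)) e^{sK} ds` are positive semidefinite
for all `t ≥ 0` if and only if `C + i(KᵀJ + JK)` is positive semidefinite. -/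
theorem integral_posSemidef_iff_complex {n : ℕ}
    (K C : Matrix (Fin n ⊕ Fin n) (Fin n ⊕ Fin n) ℝ) (hC : C.IsSymm) :
    (∀ t : ℝ, 0 ≤ t →
      (Matrix.of fun i j => ∫ s in (0:ℝ)..t,
        ((NormedSpace.exp (s • Kᵀ)).map (Complex.ofReal ·)
          * (C.map (Complex.ofReal ·)
              - Complex.I • ((Kᵀ * Jmat n + Jmat n * K).map (Complex.ofReal ·)))
          * (NormedSpace.exp (s • K)).map (Complex.ofReal ·)) i j).PosSemidef)
    ↔ (C.map (Complex.ofReal ·)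
        + Complex.I • ((Kᵀ * Jmat n + Jmat n * K).map (Complex.ofReal ·))).PosSemidef := by
  classical
  set A : Matrix (Fin n ⊕ Fin n) (Fin n ⊕ Fin n) ℝ := Kᵀ * Jmat n + Jmat n * K with hA
  set Cc := C.map (Complex.ofReal ·) with hCc
  set Ac := A.map (Complex.ofReal ·) with hAc
  -- A is skew-symmetric
  have hJT : (Jmat n)ᵀ = -(Jmat n) := by
    rw [Jmat, Matrix.fromBlocks_transpose]
    ext (i|i) (j|j) <;> simp [Matrix.fromBlocks]
  have hAT : Aᵀ = -A := by
    simp only [hA, Matrix.transpose_add, Matrix.transpose_mul, Matrix.transpose_transpose, hJT,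
      Matrix.neg_mul, Matrix.mul_neg, neg_add_rev]
  -- complexification lemmas
  have hmapT : ∀ M : Matrix (Fin n ⊕ Fin n) (Fin n ⊕ Fin n) ℝ,
      (M.map (Complex.ofReal ·))ᴴ = Mᵀ.map (Complex.ofReal ·) := by
    intro M; ext i j; simp [conjTranspose_apply, Complex.conj_ofReal]
  have hmapTr : ∀ M : Matrix (Fin n ⊕ Fin n) (Fin n ⊕ Fin n) ℝ,
      (M.map (Complex.ofReal ·))ᵀ = Mᵀ.map (Complex.ofReal ·) := by
    intro M; ext i j; simp
  have hCcH : Ccᴴ = Cc := by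
    rw [hCc, hmapT, hC.eq]
  have hCcT : Ccᵀ = Cc := by
    rw [hCc, hmapTr, hC.eq]
  have hAcH : Acᴴ = -Ac := by
    rw [hAc, hmapT, hAT]; simp [Matrix.map]; rfl
  have hAcT : Acᵀ = -Ac := by
    rw [hAc, hmapTr, hAT]; simp [Matrix.map]; rfl
  set Mneg := Cc - Complex.I • Ac with hMneg
  set Mpos := Cc + Complex.I • Ac with hMpos
  have hermNeg : Mneg.IsHermitian := by
    unfold Matrix.IsHermitian
    rw [hMneg, conjTranspose_sub, conjTranspose_smul, hCcH, hAcH]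
    simp
  have hermPos : Mpos.IsHermitian := by
    unfold Matrix.IsHermitian
    rw [hMpos, conjTranspose_add, conjTranspose_smul, hCcH, hAcH]
    simp
  have hT : Mnegᵀ = Mpos := by
    rw [hMneg, hMpos, transpose_sub, transpose_smul, hCcT, hAcT]
    simp
  have hTpos : Mposᵀ = Mneg := by
    rw [hMneg, hMpos, transpose_add, transpose_smul, hCcT, hAcT]
    simp [smul_neg, sub_eq_add_neg]
  -- equivalence of the two one-sided conditions
  have hNegPos : Mneg.PosSemidef ↔ Mpos.PosSemidef := by
    constructor
    · intro h; rw [← hT]; exact h.transpose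
    · intro h; rw [← hTpos]; exact h.transpose
  -- the integrand
  set G : ℝ → Matrix (Fin n ⊕ Fin n) (Fin n ⊕ Fin n) ℂ := fun s =>
    (NormedSpace.exp (s • Kᵀ)).map (Complex.ofReal ·) * Mneg
      * (NormedSpace.exp (s • K)).map (Complex.ofReal ·) with hG
  have hB : ∀ s : ℝ, ((NormedSpace.exp (s • K)).map (Complex.ofReal ·))ᴴ
      = (NormedSpace.exp (s • Kᵀ)).map (Complex.ofReal ·) := by
    intro s
    rw [hmapT, ← Matrix.exp_transpose, transpose_smul]
  have hGcont : Continuous G := by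
    have h1 : Continuous fun s : ℝ => (NormedSpace.exp (s • K)).map (Complex.ofReal ·) :=
      ((exp_continuous.comp (by continuity : Continuous fun s : ℝ => s • K))).matrix_map
        Complex.continuous_ofReal
    have h2 : Continuous fun s : ℝ => (NormedSpace.exp (s • Kᵀ)).map (Complex.ofReal ·) :=
      ((exp_continuous.comp (by continuity : Continuous fun s : ℝ => s • Kᵀ))).matrix_map
        Complex.continuous_ofReal
    exact (h2.matrix_mul continuous_const).matrix_mul h1
  have hG0 : G 0 = Mneg := by
    rw [hG]
    simp [NormedSpace.exp_zero, Matrix.map_one (Complex.ofReal ·) (by simp) (by simp)]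
  have hGherm : ∀ s, (G s)ᴴ = G s := by
    intro s
    rw [hG]
    simp only [conjTranspose_mul]
    rw [hermNeg.eq, hB, ← hB s]
    simp [conjTranspose_conjTranspose, Matrix.mul_assoc]
  constructor
  · -- (i) → (ii)
    intro hyp
    rw [← hNegPos]
    refine PosSemidef.of_dotProduct_mulVec_nonneg hermNeg fun x => ?_
    -- the scalar function
    set f : ℝ → ℂ := fun s => star x ⬝ᵥ (G s *ᵥ x) with hf
    have hfcont : Continuous f := by
      have : Continuous fun s => (G s) *ᵥ x := hGcont.matrix_mulVec continuous_const
      exact (continuous_const.dotProduct this)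
    have hfnn : ∀ t, 0 ≤ t → 0 ≤ ∫ s in (0:ℝ)..t, f s := by
      intro t ht
      have := (hyp t ht).dotProduct_mulVec_nonneg x
      rw [of_integral hGcont 0 t, quad_integral hGcont 0 t x] at this
      exact this
    have him : (f 0).im = 0 := by
      have hcstar : star (f 0) = f 0 := by
        rw [hf]
        simp only
        rw [← star_dotProduct, star_mulVec, ← Matrix.dotProduct_mulVec, hGherm 0]
      exact Complex.conj_eq_iff_im.mp hcstar
    have hre : 0 ≤ (f 0).re := by
      have hu : Continuous fun s => (f s).re := Complex.continuous_re.comp hfcont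
      refine nonneg_at_zero hu ?_
      intro t ht
      have h1 : (∫ s in (0:ℝ)..t, f s).re = ∫ s in (0:ℝ)..t, (f s).re :=
        (Complex.reCLM.intervalIntegral_comp_comm
          (hfcont.intervalIntegrable (μ := MeasureTheory.volume) 0 t)).symm
      have := hfnn t ht
      rw [Complex.le_def] at this
      rw [← h1]
      simpa using this.1
    have : 0 ≤ f 0 := by
      rw [Complex.le_def]
      simp [him, hre]
    rw [hf] at this
    simpa [hG0] using this
  · -- (ii) → (i)
    intro hyp t ht
    have hMnegPSD : Mneg.PosSemidef := hNegPos.mpr hyp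
    have hGpsd : ∀ s, (G s).PosSemidef := by
      intro s
      have := hMnegPSD.conjTranspose_mul_mul_same
        ((NormedSpace.exp (s • K)).map (Complex.ofReal ·))
      rwa [hB s] at this
    rw [of_integral hGcont 0 t]
    refine PosSemidef.of_dotProduct_mulVec_nonneg ?_ fun x => ?_
    · unfold Matrix.IsHermitian
      rw [ct_integral hGcont 0 t]
      congr 1
      funext s
      exact hGherm s
    · rw [quad_integral hGcont 0 t x]
      refine integral_nonneg_complex ?_ ht fun s => (hGpsd s).dotProduct_mulVec_nonneg x
      have : Continuous fun s => (G s) *ᵥ x := hGcont.matrix_mulVec continuous_const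
      exact continuous_const.dotProduct this
end

section
/- Let J denote the real 2n×2n matrix J = [[0, −I_n],[I_n, 0]], let K, C be real 2n×2n matrices, and set A_t = e^{tK}, B_t = ∫_0^t e^{sKᵀ} C e^{sK} ds. Then for every t ≥ 0 one has the identity B_t + i(J − A_tᵀ J A_t) = ∫_0^t e^{sKᵀ} (C − i(KᵀJ + JK)) e^{sK} ds. Consequently, if C + i(KᵀJ + JK) is positive semidefinite, then for every t ≥ 0 the Hermitian matrix B_t + i(J − A_tᵀ J A_t) is positive semidefinite. -/
open Matrix
open scoped MeasureTheory ComplexOrder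

/-- `B t = ∫_0^t e^{sKᵀ} C e^{sK} ds` (entrywise interval integral). -/
noncomputable def Bmat {n : ℕ} (K C : Matrix (Fin n ⊕ Fin n) (Fin n ⊕ Fin n) ℝ) (t : ℝ) :
    Matrix (Fin n ⊕ Fin n) (Fin n ⊕ Fin n) ℝ :=
  Matrix.of fun i j => ∫ s in (0:ℝ)..t,
    (NormedSpace.exp (s • Kᵀ) * C * NormedSpace.exp (s • K)) i j

namespace Bmat11Aux

open NormedSpace

section linfty

variable {n : ℕ}

attribute [local instance] Matrix.linftyOpNormedAddCommGroup Matrix.linftyOpNormedRing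
  Matrix.linftyOpNormedAlgebra

/-- Entries of `s ↦ e^{sKᵀ} M e^{sK}` are continuous. -/
lemma cont_entry (K M : Matrix (Fin n ⊕ Fin n) (Fin n ⊕ Fin n) ℝ) (i j : Fin n ⊕ Fin n) :
    Continuous fun s : ℝ => (exp (s • Kᵀ) * M * exp (s • K)) i j := by
  have h : Continuous fun s : ℝ => exp (s • Kᵀ) * M * exp (s • K) :=
    (((exp_continuous.comp (continuous_id.smul continuous_const)).mul continuous_const).mul
      (exp_continuous.comp (continuous_id.smul continuous_const)))
  exact h.matrix_elem i j

/-- Fundamental theorem of calculus applied to `s ↦ e^{sKᵀ} M e^{sK}`, entrywise. -/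
lemma integral_D_entry (K M : Matrix (Fin n ⊕ Fin n) (Fin n ⊕ Fin n) ℝ) (t : ℝ)
    (i j : Fin n ⊕ Fin n) :
    ∫ s in (0:ℝ)..t, (exp (s • Kᵀ) * (Kᵀ * M + M * K) * exp (s • K)) i j
      = ((exp (t • K))ᵀ * M * exp (t • K)) i j - M i j := by
  have hder : ∀ s : ℝ,
      HasDerivAt (fun u : ℝ => exp (u • Kᵀ) * M * exp (u • K))
        (exp (s • Kᵀ) * (Kᵀ * M + M * K) * exp (s • K)) s := by
    intro s
    have h1 : HasDerivAt (fun u : ℝ => exp (u • Kᵀ)) (Kᵀ * exp (s • Kᵀ)) s :=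
      hasDerivAt_exp_smul_const' Kᵀ s
    have h2 : HasDerivAt (fun u : ℝ => exp (u • K)) (exp (s • K) * K) s :=
      hasDerivAt_exp_smul_const K s
    have hc1 : Kᵀ * exp (s • Kᵀ) = exp (s • Kᵀ) * Kᵀ :=
      (((Commute.refl Kᵀ).smul_right s).exp_right).eq
    have hc2 : K * exp (s • K) = exp (s • K) * K :=
      (((Commute.refl K).smul_right s).exp_right).eq
    have := (h1.mul_const M).mul h2
    exact this.congr_deriv (by rw [hc1, ← hc2]; noncomm_ring)
  have hderE : ∀ s : ℝ,
      HasDerivAt (fun u : ℝ => (exp (u • Kᵀ) * M * exp (u • K)) i j)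
        ((exp (s • Kᵀ) * (Kᵀ * M + M * K) * exp (s • K)) i j) s := by
    intro s
    have hL := (Matrix.entryLinearMap ℝ ℝ i j).toContinuousLinearMap.hasFDerivAt
      (x := exp (s • Kᵀ) * M * exp (s • K))
    exact hL.comp_hasDerivAt s (hder s)
  have := intervalIntegral.integral_eq_sub_of_hasDerivAt
    (f := fun s : ℝ => (exp (s • Kᵀ) * M * exp (s • K)) i j)
    (fun s _ => hderE s) ((cont_entry K _ i j).intervalIntegrable 0 t)
  rw [this]
  simp only [zero_smul, exp_zero, one_mul, mul_one, ← Matrix.transpose_smul,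
    Matrix.exp_transpose]

end linfty

variable {n : ℕ}

lemma expT (K : Matrix (Fin n ⊕ Fin n) (Fin n ⊕ Fin n) ℝ) (s : ℝ) :
    exp (s • Kᵀ) = (exp (s • K))ᵀ := by
  rw [← Matrix.transpose_smul, Matrix.exp_transpose]

lemma mapC_mul (P Q : Matrix (Fin n ⊕ Fin n) (Fin n ⊕ Fin n) ℝ) :
    (P * Q).map (Complex.ofReal ·)
      = P.map (Complex.ofReal ·) * Q.map (Complex.ofReal ·) := by
  ext i j
  simp only [Matrix.map_apply, Matrix.mul_apply]
  push_cast
  rfl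

lemma mapC_conjTranspose (P : Matrix (Fin n ⊕ Fin n) (Fin n ⊕ Fin n) ℝ) :
    (P.map (Complex.ofReal ·))ᴴ = Pᵀ.map (Complex.ofReal ·) := by
  ext i j
  simp [Matrix.conjTranspose_apply, Matrix.map_apply, Complex.conj_ofReal]

lemma mapC_neg (P : Matrix (Fin n ⊕ Fin n) (Fin n ⊕ Fin n) ℝ) :
    (-P).map (Complex.ofReal ·) = -(P.map (Complex.ofReal ·)) := by
  ext i j
  simp [Matrix.map_apply]

lemma integrand_eq (E C D F : Matrix (Fin n ⊕ Fin n) (Fin n ⊕ Fin n) ℝ) :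
    E.map (Complex.ofReal ·)
        * (C.map (Complex.ofReal ·) - Complex.I • D.map (Complex.ofReal ·))
        * F.map (Complex.ofReal ·)
      = (E * C * F).map (Complex.ofReal ·)
        - Complex.I • (E * D * F).map (Complex.ofReal ·) := by
  rw [mul_sub, sub_mul, Matrix.mul_smul, Matrix.smul_mul, mapC_mul, mapC_mul, mapC_mul, mapC_mul]

lemma Jmat_transpose : (Jmat n)ᵀ = -(Jmat n) := by
  ext i j
  rcases i with i | i <;> rcases j with j | j <;>
    simp [Jmat, Matrix.fromBlocks, Matrix.transpose_apply, Matrix.one_apply, eq_comm]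

lemma Dmat_transpose (K : Matrix (Fin n ⊕ Fin n) (Fin n ⊕ Fin n) ℝ) :
    (Kᵀ * Jmat n + Jmat n * K)ᵀ = -(Kᵀ * Jmat n + Jmat n * K) := by
  rw [Matrix.transpose_add, Matrix.transpose_mul, Matrix.transpose_mul,
    Matrix.transpose_transpose, Jmat_transpose]
  simp only [Matrix.neg_mul, Matrix.mul_neg]
  abel

lemma intervalIntegral_conj {f : ℝ → ℂ} {a b : ℝ} :
    ∫ s in a..b, (starRingEnd ℂ) (f s) = (starRingEnd ℂ) (∫ s in a..b, f s) := by
  rw [intervalIntegral, intervalIntegral, integral_conj, integral_conj, ← map_sub]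

lemma integral_nonneg_cplx {t : ℝ} (ht : 0 ≤ t) {w : ℝ → ℂ} (hw : ∀ s, 0 ≤ w s) :
    0 ≤ ∫ s in (0:ℝ)..t, w s := by
  have h1 : ∀ s, w s = ((w s).re : ℂ) := fun s =>
    Complex.ext rfl (by simpa using (Complex.le_def.mp (hw s)).2.symm)
  rw [intervalIntegral.integral_congr (g := fun s => ((w s).re : ℂ)) (fun s _ => h1 s),
    intervalIntegral.integral_ofReal]
  exact Complex.zero_le_real.mpr
    (intervalIntegral.integral_nonneg ht fun u _ => (Complex.le_def.mp (hw u)).1)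

/-- The main integral identity, valid for every `t`. -/
lemma identity (K C : Matrix (Fin n ⊕ Fin n) (Fin n ⊕ Fin n) ℝ) (t : ℝ) :
    (Bmat K C t).map (Complex.ofReal ·)
        + Complex.I • ((Jmat n
            - (exp (t • K))ᵀ * Jmat n * exp (t • K)).map (Complex.ofReal ·))
      = Matrix.of fun i j => ∫ s in (0:ℝ)..t,
          ((exp (s • Kᵀ)).map (Complex.ofReal ·)
            * (C.map (Complex.ofReal ·)
                - Complex.I • ((Kᵀ * Jmat n + Jmat n * K).map (Complex.ofReal ·)))
            * (exp (s • K)).map (Complex.ofReal ·)) i j := by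
  ext i j
  have h1 : ∀ s : ℝ,
      ((exp (s • Kᵀ)).map (Complex.ofReal ·)
          * (C.map (Complex.ofReal ·)
              - Complex.I • ((Kᵀ * Jmat n + Jmat n * K).map (Complex.ofReal ·)))
          * (exp (s • K)).map (Complex.ofReal ·)) i j
        = ((exp (s • Kᵀ) * C * exp (s • K)) i j : ℝ)
          - Complex.I * ((exp (s • Kᵀ) * (Kᵀ * Jmat n + Jmat n * K) * exp (s • K)) i j : ℝ) := by
    intro s
    rw [integrand_eq]
    simp [Matrix.sub_apply, Matrix.smul_apply, Matrix.map_apply, smul_eq_mul]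
  have hf1 : IntervalIntegrable
      (fun s : ℝ => ((exp (s • Kᵀ) * C * exp (s • K)) i j : ℂ)) MeasureTheory.volume 0 t :=
    (Complex.continuous_ofReal.comp (cont_entry K C i j)).intervalIntegrable 0 t
  have hf2 : IntervalIntegrable
      (fun s : ℝ => Complex.I *
        ((exp (s • Kᵀ) * (Kᵀ * Jmat n + Jmat n * K) * exp (s • K)) i j : ℂ))
      MeasureTheory.volume 0 t :=
    (continuous_const.mul
      (Complex.continuous_ofReal.comp (cont_entry K _ i j))).intervalIntegrable 0 t
  rw [Matrix.of_apply, intervalIntegral.integral_congr (fun s _ => h1 s),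
    intervalIntegral.integral_sub hf1 hf2, intervalIntegral.integral_const_mul,
    intervalIntegral.integral_ofReal, intervalIntegral.integral_ofReal, integral_D_entry]
  simp only [Matrix.add_apply, Matrix.map_apply, Matrix.smul_apply, Matrix.sub_apply,
    Bmat, Matrix.of_apply, smul_eq_mul]
  push_cast
  ring

end Bmat11Aux

open Bmat11Aux NormedSpace in
/-- With `A t = e^{tK}` and `B t = ∫_0^t e^{sKᵀ} C e^{sK} ds`, for each
`t ≥ 0` one has `B t + i(J - (A t)ᵀ J (A t)) = ∫_0^t e^{sKᵀ} (C - i(KᵀJ + JK)) e^{sK} ds`;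
consequently, if `C + i(KᵀJ + JK)` is positive semidefinite, then so is
`B t + i(J - (A t)ᵀ J (A t))` for every `t ≥ 0`. -/
theorem Bmat_add_I_smul_eq_integral {n : ℕ}
    (K C : Matrix (Fin n ⊕ Fin n) (Fin n ⊕ Fin n) ℝ) :
    (∀ t : ℝ, 0 ≤ t →
      (Bmat K C t).map (Complex.ofReal ·)
        + Complex.I • ((Jmat n
            - (NormedSpace.exp (t • K))ᵀ * Jmat n * NormedSpace.exp (t • K)).map
              (Complex.ofReal ·))
      = Matrix.of fun i j => ∫ s in (0:ℝ)..t,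
          ((NormedSpace.exp (s • Kᵀ)).map (Complex.ofReal ·)
            * (C.map (Complex.ofReal ·)
                - Complex.I • ((Kᵀ * Jmat n + Jmat n * K).map (Complex.ofReal ·)))
            * (NormedSpace.exp (s • K)).map (Complex.ofReal ·)) i j) ∧
    ((C.map (Complex.ofReal ·)
        + Complex.I • ((Kᵀ * Jmat n + Jmat n * K).map (Complex.ofReal ·))).PosSemidef →
      ∀ t : ℝ, 0 ≤ t →
        ((Bmat K C t).map (Complex.ofReal ·)
          + Complex.I • ((Jmat n
              - (NormedSpace.exp (t • K))ᵀ * Jmat n * NormedSpace.exp (t • K)).map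
                (Complex.ofReal ·))).PosSemidef) := by
  classical
  refine ⟨fun t _ => identity K C t, fun h t ht => ?_⟩
  rw [identity K C t]
  set D : Matrix (Fin n ⊕ Fin n) (Fin n ⊕ Fin n) ℝ := Kᵀ * Jmat n + Jmat n * K with hD
  set Q : Matrix (Fin n ⊕ Fin n) (Fin n ⊕ Fin n) ℂ :=
    C.map (Complex.ofReal ·) - Complex.I • D.map (Complex.ofReal ·) with hQ
  -- `Q` is the transpose of the PSD matrix in the hypothesis, hence PSD.
  have hCsymm : Cᵀ.map (Complex.ofReal ·) = C.map (Complex.ofReal ·) := by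
    have hherm := h.isHermitian
    unfold Matrix.IsHermitian at hherm
    rw [Matrix.conjTranspose_add, Matrix.conjTranspose_smul, mapC_conjTranspose,
      mapC_conjTranspose, Dmat_transpose, mapC_neg, Complex.star_def, Complex.conj_I] at hherm
    have : Cᵀ.map (Complex.ofReal ·) + Complex.I • D.map (Complex.ofReal ·)
        = C.map (Complex.ofReal ·) + Complex.I • D.map (Complex.ofReal ·) := by
      simpa [neg_smul, smul_neg, hD] using hherm
    exact add_right_cancel this
  have hQpsd : Q.PosSemidef := by
    have hP := h.transpose
    have : (C.map (Complex.ofReal ·)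
        + Complex.I • ((Kᵀ * Jmat n + Jmat n * K).map (Complex.ofReal ·)))ᵀ = Q := by
      rw [Matrix.transpose_add, Matrix.transpose_smul, ← Matrix.transpose_map,
        ← Matrix.transpose_map, Dmat_transpose, mapC_neg, hCsymm]
      simp [hQ, hD, sub_eq_add_neg]
    rwa [this] at hP
  -- the integrand is PSD for every `s`
  have hNf : ∀ s : ℝ,
      ((exp (s • Kᵀ)).map (Complex.ofReal ·) * Q * (exp (s • K)).map (Complex.ofReal ·)
        : Matrix (Fin n ⊕ Fin n) (Fin n ⊕ Fin n) ℂ).PosSemidef := by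
    intro s
    have hE : (exp (s • Kᵀ)).map (Complex.ofReal ·)
        = ((exp (s • K)).map (Complex.ofReal ·))ᴴ := by
      rw [mapC_conjTranspose, expT]
    rw [hE]
    exact hQpsd.conjTranspose_mul_mul_same _
  -- entrywise continuity of the integrand
  have hcontN : ∀ i j, Continuous fun s : ℝ =>
      ((exp (s • Kᵀ)).map (Complex.ofReal ·) * Q
        * (exp (s • K)).map (Complex.ofReal ·)) i j := by
    intro i j
    have he : (fun s : ℝ => ((exp (s • Kᵀ)).map (Complex.ofReal ·) * Q
        * (exp (s • K)).map (Complex.ofReal ·)) i j)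
        = fun s : ℝ => ((exp (s • Kᵀ) * C * exp (s • K)) i j : ℝ)
          - Complex.I * ((exp (s • Kᵀ) * D * exp (s • K)) i j : ℝ) := by
      funext s
      rw [hQ, integrand_eq]
      simp [Matrix.sub_apply, Matrix.smul_apply, Matrix.map_apply, smul_eq_mul]
    rw [he]
    exact (Complex.continuous_ofReal.comp (cont_entry K C i j)).sub
      (continuous_const.mul (Complex.continuous_ofReal.comp (cont_entry K D i j)))
  set Nf : ℝ → Matrix (Fin n ⊕ Fin n) (Fin n ⊕ Fin n) ℂ := fun s =>
    (exp (s • Kᵀ)).map (Complex.ofReal ·) * Q * (exp (s • K)).map (Complex.ofReal ·)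
    with hNfdef
  rw [Matrix.posSemidef_iff_dotProduct_mulVec]
  constructor
  · -- Hermitian
    show _ = _
    ext i j
    rw [Matrix.conjTranspose_apply, Matrix.of_apply, Matrix.of_apply]
    have he : ∀ s : ℝ, (starRingEnd ℂ) (Nf s j i) = Nf s i j := fun s => by
      have h2 := congrFun (congrFun (hNf s).1 i) j
      rw [Matrix.conjTranspose_apply] at h2
      exact h2
    calc star (∫ s in (0:ℝ)..t, Nf s j i)
        = ∫ s in (0:ℝ)..t, (starRingEnd ℂ) (Nf s j i) := intervalIntegral_conj.symm
      _ = ∫ s in (0:ℝ)..t, Nf s i j := by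
          exact intervalIntegral.integral_congr fun s _ => he s
  · -- nonnegativity
    intro x
    have key : (star x) ⬝ᵥ ((Matrix.of fun i j => ∫ s in (0:ℝ)..t, Nf s i j) *ᵥ x)
        = ∫ s in (0:ℝ)..t, (star x) ⬝ᵥ (Nf s *ᵥ x) := by
      simp only [dotProduct, Matrix.mulVec, Matrix.of_apply, Pi.star_apply]
      have step1 : ∀ (i : Fin n ⊕ Fin n),
          star (x i) * ∑ j, (∫ s in (0:ℝ)..t, Nf s i j) * x j
            = ∫ s in (0:ℝ)..t, star (x i) * ∑ j, Nf s i j * x j := by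
        intro i
        calc star (x i) * ∑ j, (∫ s in (0:ℝ)..t, Nf s i j) * x j
            = star (x i) * ∑ j, ∫ s in (0:ℝ)..t, Nf s i j * x j := by
              simp_rw [← intervalIntegral.integral_mul_const]
          _ = star (x i) * ∫ s in (0:ℝ)..t, ∑ j, Nf s i j * x j := by
              rw [intervalIntegral.integral_finset_sum (f := fun j s => Nf s i j * x j)
                (fun j _ => ((hcontN i j).mul continuous_const).intervalIntegrable 0 t)]
          _ = ∫ s in (0:ℝ)..t, star (x i) * ∑ j, Nf s i j * x j :=
              (intervalIntegral.integral_const_mul _ _).symm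
      simp_rw [step1]
      rw [← intervalIntegral.integral_finset_sum]
      intro i _
      exact (continuous_const.mul (continuous_finset_sum _ fun j _ =>
        (hcontN i j).mul continuous_const)).intervalIntegrable 0 t
    rw [key]
    exact integral_nonneg_cplx ht fun s => (Matrix.posSemidef_iff_dotProduct_mulVec.mp (hNf s)).2 x
end

section
/- Let J denote the real 2n×2n matrix J = [[0, −I_n],[I_n, 0]]. Let A, B, S be real 2n×2n matrices with B and S symmetric. If the Hermitian matrices 2S + iJ and B + i(J − AᵀJA) are both positive semidefinite, then the Hermitian matrix 2(AᵀSA + ½B) + iJ is positive semidefinite. -/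
open Matrix
open scoped ComplexOrder

/-- Let `A`, `B`, `S` be real `2n × 2n` matrices with `B`, `S`
symmetric.  If `2S + iJ` and `B + i(J - AᵀJA)` are positive semidefinite, then so is
`2(AᵀSA + ½B) + iJ`. -/
theorem gaussian_covariance_transform_posSemidef {n : ℕ}
    (A B S : Matrix (Fin n ⊕ Fin n) (Fin n ⊕ Fin n) ℝ)
    (hB : B.IsSymm) (hS : S.IsSymm)
    (h1 : (((2 : ℝ) • S).map (Complex.ofReal ·)
        + Complex.I • ((Jmat n).map (Complex.ofReal ·))).PosSemidef)
    (h2 : (B.map (Complex.ofReal ·)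
        + Complex.I • ((Jmat n - Aᵀ * Jmat n * A).map (Complex.ofReal ·))).PosSemidef) :
    (((2 : ℝ) • (Aᵀ * S * A + (1 / 2 : ℝ) • B)).map (Complex.ofReal ·)
        + Complex.I • ((Jmat n).map (Complex.ofReal ·))).PosSemidef := by
  set A' : Matrix (Fin n ⊕ Fin n) (Fin n ⊕ Fin n) ℂ := A.map (Complex.ofReal ·) with hA'
  have hconj : A'ᴴ = Aᵀ.map (Complex.ofReal ·) := by
    ext i j
    simp [hA', conjTranspose_apply, Matrix.map_apply, Matrix.transpose_apply]
  have key := (h1.conjTranspose_mul_mul_same A').add h2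
  convert key using 1
  rw [hconj]
  have hmap : ∀ (X Y : Matrix (Fin n ⊕ Fin n) (Fin n ⊕ Fin n) ℝ),
      (X * Y).map (Complex.ofReal ·) = X.map (Complex.ofReal ·) * Y.map (Complex.ofReal ·) :=
    fun X Y => Matrix.map_mul (f := Complex.ofRealHom)
  have hsmul : ∀ (r : ℝ) (X : Matrix (Fin n ⊕ Fin n) (Fin n ⊕ Fin n) ℝ),
      (r • X).map (Complex.ofReal ·) = (r : ℂ) • X.map (Complex.ofReal ·) := by
    intro r X; ext i j; simp [Matrix.map_apply]
  have hadd : ∀ (X Y : Matrix (Fin n ⊕ Fin n) (Fin n ⊕ Fin n) ℝ),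
      (X + Y).map (Complex.ofReal ·) = X.map (Complex.ofReal ·) + Y.map (Complex.ofReal ·) := by
    intro X Y; ext i j; simp [Matrix.map_apply]
  have hsub : ∀ (X Y : Matrix (Fin n ⊕ Fin n) (Fin n ⊕ Fin n) ℝ),
      (X - Y).map (Complex.ofReal ·) = X.map (Complex.ofReal ·) - Y.map (Complex.ofReal ·) := by
    intro X Y; ext i j; simp [Matrix.map_apply]
  simp only [hmap, hsmul, hadd, hsub, hA', smul_add, mul_add, add_mul,
    Matrix.mul_smul, Matrix.smul_mul, smul_sub]
  ring_nf
  module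
end

section
/- For vectors ℓ, m ∈ ℝⁿ and a real symmetric 2n×2n matrix S, define φ_{ℓ,m,S} : ℂⁿ → ℂ by φ_{ℓ,m,S}(z) = exp{−i√2(ℓᵀx − mᵀy) − (xᵀ, yᵀ) S (x; y)}, where x = Re z, y = Im z. Let K, C be real 2n×2n matrices with C symmetric, and let R : ℂⁿ → ℝ²ⁿ be Rz = (Re z, Im z)ᵀ. For t ≥ 0 define ℓ_t, m_t ∈ ℝⁿ by (ℓ_t; −m_t) = e^{tKᵀ}(ℓ; −m) and S_t = e^{tKᵀ} S e^{tK} + ½ ∫_0^t e^{sKᵀ} C e^{sK} ds. Then for every z ∈ ℂⁿ and t ≥ 0: φ_{ℓ,m,S}(R⁻¹ e^{tK} R z) · exp{−½ (Rz)ᵀ (∫_0^t e^{sKᵀ} C e^{sK} ds) (Rz)} = φ_{ℓ_t, m_t, S_t}(z). -/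
open Matrix
open scoped MeasureTheory

/-- The real-linear isomorphism `R : ℂⁿ → ℝ²ⁿ`, `Rz = (Re z, Im z)ᵀ`. -/
noncomputable def Rv {n : ℕ} (z : Fin n → ℂ) : Fin n ⊕ Fin n → ℝ :=
  Sum.elim (fun i => (z i).re) fun i => (z i).im

/-- The inverse `R⁻¹ : ℝ²ⁿ → ℂⁿ`, `(x; y) ↦ x + iy`. -/
noncomputable def Rinv {n : ℕ} (w : Fin n ⊕ Fin n → ℝ) : Fin n → ℂ :=
  fun i => (w (Sum.inl i) : ℂ) + (w (Sum.inr i) : ℂ) * Complex.I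

/-- The quantum Fourier transform of the Gaussian state with momentum mean `ℓ`, position
mean `m` and covariance matrix `S`:
`φ_{ℓ,m,S}(z) = exp (−i√2 (ℓᵀx − mᵀy) − (xᵀ, yᵀ) S (x; y))`, `x = Re z`, `y = Im z`. -/
noncomputable def gaussPhi {n : ℕ} (ℓ m : Fin n → ℝ)
    (S : Matrix (Fin n ⊕ Fin n) (Fin n ⊕ Fin n) ℝ) (z : Fin n → ℂ) : ℂ :=
  Complex.exp (-Complex.I * (Real.sqrt 2 : ℝ)
      * (((∑ i, ℓ i * (z i).re) - ∑ i, m i * (z i).im : ℝ) : ℂ)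
    - ((Rv z ⬝ᵥ (S *ᵥ Rv z) : ℝ) : ℂ))


lemma Rv_Rinv {n : ℕ} (w : Fin n ⊕ Fin n → ℝ) : Rv (Rinv w) = w := by
  funext i
  cases i with
  | inl i => simp [Rv, Rinv]
  | inr i => simp [Rv, Rinv]

lemma Rinv_re {n : ℕ} (w : Fin n ⊕ Fin n → ℝ) (i : Fin n) :
    (Rinv w i).re = w (Sum.inl i) := by simp [Rinv]

lemma Rinv_im {n : ℕ} (w : Fin n ⊕ Fin n → ℝ) (i : Fin n) :
    (Rinv w i).im = w (Sum.inr i) := by simp [Rinv]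

/-- The predual of the quasifree semigroup determined by `(K, C)` maps
Gaussian states to Gaussian states: with `(ℓ_t; −m_t) = e^{tKᵀ}(ℓ; −m)` and
`S_t = e^{tKᵀ} S e^{tK} + ½ ∫_0^t e^{sKᵀ} C e^{sK} ds`, one has
`φ_{ℓ,m,S}(R⁻¹ e^{tK} R z) · exp (−½ (Rz)ᵀ B_t (Rz)) = φ_{ℓ_t,m_t,S_t}(z)`. -/
theorem gaussian_state_evolution {n : ℕ} (ℓ m : Fin n → ℝ)
    (S K C : Matrix (Fin n ⊕ Fin n) (Fin n ⊕ Fin n) ℝ)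
    (hS : S.IsSymm) (hC : C.IsSymm) (t : ℝ) (ht : 0 ≤ t) (z : Fin n → ℂ) :
    gaussPhi ℓ m S (Rinv (NormedSpace.exp (t • K) *ᵥ Rv z))
        * Complex.exp (-(1 / 2 : ℂ) * ((Rv z ⬝ᵥ (Bmat K C t *ᵥ Rv z) : ℝ) : ℂ))
      = gaussPhi
          (fun i => (NormedSpace.exp (t • Kᵀ) *ᵥ Sum.elim ℓ fun i => -m i) (Sum.inl i))
          (fun i => -((NormedSpace.exp (t • Kᵀ) *ᵥ Sum.elim ℓ fun i => -m i) (Sum.inr i)))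
          (NormedSpace.exp (t • Kᵀ) * S * NormedSpace.exp (t • K)
            + (1 / 2 : ℝ) • Bmat K C t)
          z := by
  classical
  set E := NormedSpace.exp (t • K) with hE
  set v := Rv z with hv
  set a : Fin n ⊕ Fin n → ℝ := Sum.elim ℓ fun i => -m i with ha
  set B := Bmat K C t with hB
  have hET : NormedSpace.exp (t • Kᵀ) = Eᵀ := by
    rw [hE, ← Matrix.transpose_smul, Matrix.exp_transpose]
  -- linear part
  have h1 : ((∑ i, ℓ i * (E *ᵥ v) (Sum.inl i)) - ∑ i, m i * (E *ᵥ v) (Sum.inr i))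
      = ((∑ i, (Eᵀ *ᵥ a) (Sum.inl i) * (z i).re)
          - ∑ i, -((Eᵀ *ᵥ a) (Sum.inr i)) * (z i).im) := by
    have hL : ((∑ i, ℓ i * (E *ᵥ v) (Sum.inl i)) - ∑ i, m i * (E *ᵥ v) (Sum.inr i))
        = a ⬝ᵥ (E *ᵥ v) := by
      simp only [dotProduct, Fintype.sum_sum_type, ha, Sum.elim_inl, Sum.elim_inr]
      simp [neg_mul, Finset.sum_neg_distrib, sub_eq_add_neg]
    have hR : ((∑ i, (Eᵀ *ᵥ a) (Sum.inl i) * (z i).re)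
          - ∑ i, -((Eᵀ *ᵥ a) (Sum.inr i)) * (z i).im)
        = (Eᵀ *ᵥ a) ⬝ᵥ v := by
      simp only [dotProduct, Fintype.sum_sum_type, hv, Rv, Sum.elim_inl, Sum.elim_inr]
      simp [neg_mul, Finset.sum_neg_distrib, sub_neg_eq_add]
    rw [hL, hR, Matrix.dotProduct_mulVec, Matrix.mulVec_transpose]
  -- quadratic part
  have h2 : (E *ᵥ v) ⬝ᵥ (S *ᵥ (E *ᵥ v)) + (1 / 2 : ℝ) * (v ⬝ᵥ (B *ᵥ v))
      = v ⬝ᵥ ((Eᵀ * S * E + (1 / 2 : ℝ) • B) *ᵥ v) := by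
    rw [Matrix.add_mulVec, dotProduct_add, Matrix.smul_mulVec,
      dotProduct_smul, smul_eq_mul, ← Matrix.mulVec_mulVec, ← Matrix.mulVec_mulVec,
      Matrix.dotProduct_mulVec (v := v) (A := Eᵀ), Matrix.vecMul_transpose,
      Matrix.dotProduct_mulVec (A := S), ← Matrix.dotProduct_mulVec]
  have h1' := congrArg (fun r : ℝ => (r : ℂ)) h1
  have h2' := congrArg (fun r : ℝ => (r : ℂ)) h2
  push_cast at h1' h2'
  unfold gaussPhi
  rw [Rv_Rinv, ← Complex.exp_add, hET, ← hv]
  congr 1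
  simp only [Rinv_re, Rinv_im]
  push_cast
  linear_combination (-Complex.I * (Real.sqrt 2 : ℝ)) * h1' - h2'
end
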